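/- arXiv:2307.14292 — 7 statements merged into one kernel-verified Lean document; each statement's English description precedes it below -/
import Mathlib

section
/- For every k ≥ 1 there exists a constant C = C(k) such that every finite simple graph on n ≥ 2 vertices of NLC-width at most k admits an NLC-decomposition tree of width k·2^{k+1} whose depth is at most C·log₂ n. -/
def joinGraph {k : ℕ} {α β : Type*} (G₁ : SimpleGraph α) (G₂ : SimpleGraph β)
    (c₁ : α → Fin k) (c₂ : β → Fin k) (S : Set (Fin k × Fin k)) : SimpleGraph (α ⊕ β) where
  Adj x y :=
    match x, y with
    | Sum.inl a, Sum.inl b => G₁.Adj a b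
    | Sum.inr a, Sum.inr b => G₂.Adj a b
    | Sum.inl a, Sum.inr b => (c₁ a, c₂ b) ∈ S
    | Sum.inr b, Sum.inl a => (c₁ a, c₂ b) ∈ S
  symm := ⟨by
    rintro (a | a) (b | b) h
    · exact G₁.adj_symm h
    · exact h
    · exact h
    · exact G₂.adj_symm h⟩
  loopless := ⟨by
    rintro (a | a) h
    · exact G₁.irrefl h
    · exact G₂.irrefl h⟩


/-- NLC expressions with colors in `Fin k`. -/
inductive NLCExpr (k : ℕ) : Type
  | single (c : Fin k) : NLCExpr k
  | join (S : Set (Fin k × Fin k)) (t₁ t₂ : NLCExpr k) : NLCExpr k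
  | recolor (R : Fin k → Fin k) (t : NLCExpr k) : NLCExpr k

namespace NLCExpr

variable {k : ℕ}

/-- The vertex set of the colored graph built by an NLC expression. -/
def V : NLCExpr k → Type
  | single _ => Unit
  | join _ t₁ t₂ => t₁.V ⊕ t₂.V
  | recolor _ t => t.V

/-- The coloring of the colored graph built by an NLC expression. -/
def coloring : (t : NLCExpr k) → t.V → Fin k
  | single c => fun _ => c
  | join _ t₁ t₂ => Sum.elim t₁.coloring t₂.coloring
  | recolor R t => fun v => R (t.coloring v)

/-- The graph built by an NLC expression. -/
def graph : (t : NLCExpr k) → SimpleGraph t.V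
  | single _ => ⊥
  | join S t₁ t₂ => joinGraph t₁.graph t₂.graph t₁.coloring t₂.coloring S
  | recolor _ t => t.graph

end NLCExpr


/-- `G` has NLC-width at most `k`: it is the underlying graph of a member of `NLC_k`. -/
def HasNLCWidthLE {V : Type*} (G : SimpleGraph V) (k : ℕ) : Prop :=
  ∃ t : NLCExpr k, Nonempty (G ≃g t.graph)

/-- NLC-decomposition trees of width `k`: leaves create colored vertices, internal nodes
have two ordered children, carry a set `S` of pairs of colors and an optional recoloring. -/
inductive NLCTree (k : ℕ) : Type
  | leaf (c : Fin k) : NLCTree k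
  | node (S : Set (Fin k × Fin k)) (R : Option (Fin k → Fin k)) (l r : NLCTree k) : NLCTree k

namespace NLCTree

variable {k : ℕ}

def V : NLCTree k → Type
  | leaf _ => Unit
  | node _ _ l r => l.V ⊕ r.V

def coloring : (t : NLCTree k) → t.V → Fin k
  | leaf c => fun _ => c
  | node _ R l r => fun v => (R.getD id) (Sum.elim l.coloring r.coloring v)

def graph : (t : NLCTree k) → SimpleGraph t.V
  | leaf _ => ⊥
  | node S _ l r => joinGraph l.graph r.graph l.coloring r.coloring S

/-- The depth of the tree: maximum number of edges on a root-to-leaf path. -/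
def depth : NLCTree k → ℕ
  | leaf _ => 0
  | node _ _ l r => max l.depth r.depth + 1

end NLCTree


-- ============ auxiliary development ============

/-- Generalized colored join. -/
def gjoin {α β Γ₁ Γ₂ : Type} (G₁ : SimpleGraph α) (G₂ : SimpleGraph β)
    (c₁ : α → Γ₁) (c₂ : β → Γ₂) (S : Γ₁ → Γ₂ → Prop) : SimpleGraph (α ⊕ β) where
  Adj x y :=
    match x, y with
    | Sum.inl a, Sum.inl b => G₁.Adj a b
    | Sum.inr a, Sum.inr b => G₂.Adj a b
    | Sum.inl a, Sum.inr b => S (c₁ a) (c₂ b)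
    | Sum.inr b, Sum.inl a => S (c₁ a) (c₂ b)
  symm := ⟨by
    rintro (a | a) (b | b) h
    · exact G₁.adj_symm h
    · exact h
    · exact h
    · exact G₂.adj_symm h⟩
  loopless := ⟨by
    rintro (a | a) h
    · exact G₁.irrefl h
    · exact G₂.irrefl h⟩

@[simp] lemma gjoin_adj_ll {α β Γ₁ Γ₂ : Type} (G₁ : SimpleGraph α) (G₂ : SimpleGraph β)
    (c₁ : α → Γ₁) (c₂ : β → Γ₂) (S : Γ₁ → Γ₂ → Prop) (a b : α) :
    (gjoin G₁ G₂ c₁ c₂ S).Adj (Sum.inl a) (Sum.inl b) ↔ G₁.Adj a b := Iff.rfl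
@[simp] lemma gjoin_adj_rr {α β Γ₁ Γ₂ : Type} (G₁ : SimpleGraph α) (G₂ : SimpleGraph β)
    (c₁ : α → Γ₁) (c₂ : β → Γ₂) (S : Γ₁ → Γ₂ → Prop) (a b : β) :
    (gjoin G₁ G₂ c₁ c₂ S).Adj (Sum.inr a) (Sum.inr b) ↔ G₂.Adj a b := Iff.rfl
@[simp] lemma gjoin_adj_lr {α β Γ₁ Γ₂ : Type} (G₁ : SimpleGraph α) (G₂ : SimpleGraph β)
    (c₁ : α → Γ₁) (c₂ : β → Γ₂) (S : Γ₁ → Γ₂ → Prop) (a : α) (b : β) :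
    (gjoin G₁ G₂ c₁ c₂ S).Adj (Sum.inl a) (Sum.inr b) ↔ S (c₁ a) (c₂ b) := Iff.rfl
@[simp] lemma gjoin_adj_rl {α β Γ₁ Γ₂ : Type} (G₁ : SimpleGraph α) (G₂ : SimpleGraph β)
    (c₁ : α → Γ₁) (c₂ : β → Γ₂) (S : Γ₁ → Γ₂ → Prop) (a : α) (b : β) :
    (gjoin G₁ G₂ c₁ c₂ S).Adj (Sum.inr b) (Sum.inl a) ↔ S (c₁ a) (c₂ b) := Iff.rfl

lemma joinGraph_eq_gjoin {k : ℕ} {α β : Type} (G₁ : SimpleGraph α) (G₂ : SimpleGraph β)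
    (c₁ : α → Fin k) (c₂ : β → Fin k) (S : Set (Fin k × Fin k)) :
    joinGraph G₁ G₂ c₁ c₂ S = gjoin G₁ G₂ c₁ c₂ (fun a b => (a, b) ∈ S) := by
  ext x y
  rcases x with a | a <;> rcases y with b | b <;> rfl

/-- Decomposition trees over an arbitrary color type. -/
inductive CTree (γ : Type) : Type
  | leaf (c : γ) : CTree γ
  | node (S : γ → γ → Prop) (R : γ → γ) (l r : CTree γ) : CTree γ

namespace CTree
variable {γ : Type}
def V : CTree γ → Type
  | leaf _ => Unit
  | node _ _ l r => l.V ⊕ r.V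
def col : (T : CTree γ) → T.V → γ
  | leaf c => fun _ => c
  | node _ R l r => fun v => R (Sum.elim l.col r.col v)
def graph : (T : CTree γ) → SimpleGraph T.V
  | leaf _ => ⊥
  | node S _ l r => gjoin l.graph r.graph l.col r.col S
def depth : CTree γ → ℕ
  | leaf _ => 0
  | node _ _ l r => max l.depth r.depth + 1
end CTree

namespace NLCExpr
variable {k : ℕ}

def size : NLCExpr k → ℕ
  | single _ => 1
  | join _ t₁ t₂ => t₁.size + t₂.size
  | recolor _ t => t.size

lemma one_le_size : ∀ t : NLCExpr k, 1 ≤ t.size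
  | single _ => le_refl _
  | join _ t₁ t₂ => le_trans t₁.one_le_size (Nat.le_add_right _ _)
  | recolor _ t => t.one_le_size

def fintypeV : (t : NLCExpr k) → Fintype t.V
  | single _ => inferInstanceAs (Fintype Unit)
  | join _ t₁ t₂ =>
      letI := t₁.fintypeV; letI := t₂.fintypeV
      inferInstanceAs (Fintype (_ ⊕ _))
  | recolor _ t => t.fintypeV

lemma card_V : ∀ (t : NLCExpr k) (inst : Fintype t.V), @Fintype.card t.V inst = t.size
  | single _, inst => by simp [size, V]; exact @Fintype.card_unique Unit _ inst
  | join S t₁ t₂, inst => by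
      letI := t₁.fintypeV; letI := t₂.fintypeV
      have : inst = inferInstanceAs (Fintype (t₁.V ⊕ t₂.V)) := Subsingleton.elim _ _
      subst this
      simp only [size]
      have h : Fintype.card (t₁.V ⊕ t₂.V) = t₁.size + t₂.size := by
        rw [Fintype.card_sum, card_V t₁ _, card_V t₂ _]
      exact h
  | recolor R t, inst => card_V t inst
end NLCExpr

-- ============ one-hole contexts ============

inductive Ctx (k : ℕ) : Type
  | hole : Ctx k
  | joinL (S : Set (Fin k × Fin k)) (C : Ctx k) (s : NLCExpr k) : Ctx k
  | joinR (S : Set (Fin k × Fin k)) (s : NLCExpr k) (C : Ctx k) : Ctx k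
  | recolor (R : Fin k → Fin k) (C : Ctx k) : Ctx k

namespace Ctx
variable {k : ℕ}

def fill : Ctx k → NLCExpr k → NLCExpr k
  | hole, t => t
  | joinL S C s, t => .join S (C.fill t) s
  | joinR S s C, t => .join S s (C.fill t)
  | recolor R C, t => .recolor R (C.fill t)

def csize : Ctx k → ℕ
  | hole => 0
  | joinL _ C s => C.csize + s.size
  | joinR _ s C => s.size + C.csize
  | recolor _ C => C.csize

def W : Ctx k → Type
  | hole => Empty
  | joinL _ C s => C.W ⊕ s.V
  | joinR _ s C => s.V ⊕ C.W
  | recolor _ C => C.W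

def rho : Ctx k → (Fin k → Fin k)
  | hole => id
  | joinL _ C _ => C.rho
  | joinR _ _ C => C.rho
  | recolor R C => R ∘ C.rho

def col : (C : Ctx k) → C.W → Fin k
  | hole => Empty.elim
  | joinL _ C s => Sum.elim C.col s.coloring
  | joinR _ s C => Sum.elim s.coloring C.col
  | recolor R C => fun w => R (C.col w)

def A : (C : Ctx k) → C.W → Fin k → Prop
  | hole => Empty.elim
  | joinL S C s => Sum.elim C.A (fun w c => (C.rho c, s.coloring w) ∈ S)
  | joinR S s C => Sum.elim (fun w c => (s.coloring w, C.rho c) ∈ S) C.A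
  | recolor _ C => C.A

def graph : (C : Ctx k) → SimpleGraph C.W
  | hole => ⊥
  | joinL S C s => gjoin C.graph s.graph C.col s.coloring (fun a b => (a, b) ∈ S)
  | joinR S s C => gjoin s.graph C.graph s.coloring C.col (fun a b => (a, b) ∈ S)
  | recolor _ C => C.graph

def fintypeW : (C : Ctx k) → Fintype C.W
  | hole => inferInstanceAs (Fintype Empty)
  | joinL _ C s =>
      letI := C.fintypeW; letI := s.fintypeV
      inferInstanceAs (Fintype (_ ⊕ _))
  | joinR _ s C =>
      letI := C.fintypeW; letI := s.fintypeV
      inferInstanceAs (Fintype (_ ⊕ _))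
  | recolor _ C => C.fintypeW

lemma card_W : ∀ (C : Ctx k) (inst : Fintype C.W), @Fintype.card C.W inst = C.csize
  | hole, inst => by simp [csize, W]; exact @Fintype.card_eq_zero Empty inst _
  | joinL S C s, inst => by
      letI := C.fintypeW; letI := s.fintypeV
      have : inst = inferInstanceAs (Fintype (C.W ⊕ s.V)) := Subsingleton.elim _ _
      subst this
      simp only [csize]
      have h : Fintype.card (C.W ⊕ s.V) = C.csize + s.size := by
        rw [Fintype.card_sum, card_W C _, NLCExpr.card_V s _]
      exact h
  | joinR S s C, inst => by
      letI := C.fintypeW; letI := s.fintypeV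
      have : inst = inferInstanceAs (Fintype (s.V ⊕ C.W)) := Subsingleton.elim _ _
      subst this
      simp only [csize]
      have h : Fintype.card (s.V ⊕ C.W) = s.size + C.csize := by
        rw [Fintype.card_sum, card_W C _, NLCExpr.card_V s _]
      exact h
  | recolor R C, inst => card_W C inst

def fillFrom : (C : Ctx k) → (t : NLCExpr k) → C.W ⊕ t.V → (C.fill t).V
  | hole, _, Sum.inl e => e.elim
  | hole, _, Sum.inr v => v
  | joinL _ C _, t, Sum.inl (Sum.inl w) => Sum.inl (fillFrom C t (Sum.inl w))
  | joinL _ _ _, _, Sum.inl (Sum.inr u) => Sum.inr u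
  | joinL _ C _, t, Sum.inr x => Sum.inl (fillFrom C t (Sum.inr x))
  | joinR _ _ _, _, Sum.inl (Sum.inl u) => Sum.inl u
  | joinR _ _ C, t, Sum.inl (Sum.inr w) => Sum.inr (fillFrom C t (Sum.inl w))
  | joinR _ _ C, t, Sum.inr x => Sum.inr (fillFrom C t (Sum.inr x))
  | recolor _ C, t, z => fillFrom C t z

lemma fillFrom_bij : ∀ (C : Ctx k) (t : NLCExpr k), Function.Bijective (fillFrom C t)
  | hole, t => by
      constructor
      · rintro (e | x) (e' | y) h
        · exact e.elim
        · exact e.elim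
        · exact e'.elim
        · exact congrArg Sum.inr h
      · exact fun v => ⟨Sum.inr v, rfl⟩
  | joinL S C s, t => by
      let e : ((C.W ⊕ s.V) ⊕ t.V) ≃ ((C.W ⊕ t.V) ⊕ s.V) :=
        { toFun := fun z => match z with
            | .inl (.inl w) => .inl (.inl w)
            | .inl (.inr u) => .inr u
            | .inr x => .inl (.inr x)
          invFun := fun z => match z with
            | .inl (.inl w) => .inl (.inl w)
            | .inl (.inr x) => .inr x
            | .inr u => .inl (.inr u)
          left_inv := by rintro ((w | u) | x) <;> rfl
          right_inv := by rintro ((w | x) | u) <;> rfl }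
      have hfe : fillFrom (joinL S C s) t = (Sum.map (fillFrom C t) id) ∘ e := by
        funext z
        rcases z with (w | u) | x <;> rfl
      rw [hfe]
      exact (((Equiv.ofBijective _ (fillFrom_bij C t)).sumCongr (Equiv.refl s.V)).bijective).comp
        e.bijective
  | joinR S s C, t => by
      let e : ((s.V ⊕ C.W) ⊕ t.V) ≃ (s.V ⊕ (C.W ⊕ t.V)) :=
        { toFun := fun z => match z with
            | .inl (.inl u) => .inl u
            | .inl (.inr w) => .inr (.inl w)
            | .inr x => .inr (.inr x)
          invFun := fun z => match z with
            | .inl u => .inl (.inl u)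
            | .inr (.inl w) => .inl (.inr w)
            | .inr (.inr x) => .inr x
          left_inv := by rintro ((u | w) | x) <;> rfl
          right_inv := by rintro (u | (w | x)) <;> rfl }
      have hfe : fillFrom (joinR S s C) t = (Sum.map id (fillFrom C t)) ∘ e := by
        funext z
        rcases z with (u | w) | x <;> rfl
      rw [hfe]
      exact (((Equiv.refl s.V).sumCongr (Equiv.ofBijective _ (fillFrom_bij C t))).bijective).comp
        e.bijective
  | recolor R C, t => fillFrom_bij C t

/-- The canonical identification of `C.W ⊕ t.V` with the vertices of `C.fill t`. -/
noncomputable def fillEquiv (C : Ctx k) (t : NLCExpr k) : (C.W ⊕ t.V) ≃ (C.fill t).V :=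
  Equiv.ofBijective _ (fillFrom_bij C t)

@[simp] lemma fillEquiv_apply (C : Ctx k) (t : NLCExpr k) (z : C.W ⊕ t.V) :
    fillEquiv C t z = fillFrom C t z := rfl

lemma fill_coloring : ∀ (C : Ctx k) (t : NLCExpr k) (z : C.W ⊕ t.V),
    (C.fill t).coloring (fillFrom C t z) =
      Sum.elim C.col (fun x => C.rho (t.coloring x)) z
  | hole, t, Sum.inl e => e.elim
  | hole, t, Sum.inr v => rfl
  | joinL S C s, t, Sum.inl (Sum.inl w) => by
      have h := fill_coloring C t (Sum.inl w)
      exact h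
  | joinL S C s, t, Sum.inl (Sum.inr u) => rfl
  | joinL S C s, t, Sum.inr x => by
      have h := fill_coloring C t (Sum.inr x)
      exact h
  | joinR S s C, t, Sum.inl (Sum.inl u) => rfl
  | joinR S s C, t, Sum.inl (Sum.inr w) => by
      have h := fill_coloring C t (Sum.inl w)
      exact h
  | joinR S s C, t, Sum.inr x => by
      have h := fill_coloring C t (Sum.inr x)
      exact h
  | recolor R C, t, z => by
      have h := fill_coloring C t z
      rcases z with w | x <;>
        exact congrArg R h

lemma fill_adj : ∀ (C : Ctx k) (t : NLCExpr k) (z₁ z₂ : C.W ⊕ t.V),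
    (C.fill t).graph.Adj (fillFrom C t z₁) (fillFrom C t z₂) ↔
      (gjoin C.graph t.graph C.A t.coloring (fun A c => A c)).Adj z₁ z₂ := by
  intro C
  induction C with
  | hole =>
      intro t z₁ z₂
      rcases z₁ with e | x
      · exact e.elim
      rcases z₂ with e | y
      · exact e.elim
      exact Iff.rfl
  | joinL S C s ih =>
      intro t z₁ z₂
      have hcol : ∀ z : C.W ⊕ t.V,
          (C.fill t).coloring (fillFrom C t z) =
            Sum.elim C.col (fun x => C.rho (t.coloring x)) z := fill_coloring C t
      rcases z₁ with (w₁ | u₁) | x₁ <;> rcases z₂ with (w₂ | u₂) | x₂ <;>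
        simp [fillFrom, fill, NLCExpr.graph, graph, A, joinGraph_eq_gjoin, ih, hcol, col, rho] <;>
          exact Iff.rfl
  | joinR S s C ih =>
      intro t z₁ z₂
      have hcol : ∀ z : C.W ⊕ t.V,
          (C.fill t).coloring (fillFrom C t z) =
            Sum.elim C.col (fun x => C.rho (t.coloring x)) z := fill_coloring C t
      rcases z₁ with (u₁ | w₁) | x₁ <;> rcases z₂ with (u₂ | w₂) | x₂ <;>
        simp [fillFrom, fill, NLCExpr.graph, graph, A, joinGraph_eq_gjoin, ih, hcol, col, rho] <;>
          exact Iff.rfl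
  | recolor R C ih =>
      intro t z₁ z₂
      exact ih t z₁ z₂

def comp : Ctx k → Ctx k → Ctx k
  | hole, D => D
  | joinL S C s, D => joinL S (C.comp D) s
  | joinR S s C, D => joinR S s (C.comp D)
  | recolor R C, D => recolor R (C.comp D)

lemma fill_comp : ∀ (C D : Ctx k) (t : NLCExpr k), (C.comp D).fill t = C.fill (D.fill t)
  | hole, D, t => rfl
  | joinL S C s, D, t => by simp [comp, fill, fill_comp C D t]
  | joinR S s C, D, t => by simp [comp, fill, fill_comp C D t]
  | recolor R C, D, t => by simp [comp, fill, fill_comp C D t]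

lemma csize_comp : ∀ (C D : Ctx k), (C.comp D).csize = C.csize + D.csize
  | hole, D => (Nat.zero_add _).symm
  | joinL S C s, D => by simp [comp, csize, csize_comp C D]; omega
  | joinR S s C, D => by simp [comp, csize, csize_comp C D]; omega
  | recolor R C, D => csize_comp C D

lemma rho_comp : ∀ (C D : Ctx k) (c : Fin k), (C.comp D).rho c = C.rho (D.rho c)
  | hole, D, c => rfl
  | joinL S C s, D, c => rho_comp C D c
  | joinR S s C, D, c => rho_comp C D c
  | recolor R C, D, c => congrArg R (rho_comp C D c)

def compFrom : (C D : Ctx k) → C.W ⊕ D.W → (C.comp D).W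
  | hole, _, Sum.inl e => e.elim
  | hole, _, Sum.inr w => w
  | joinL _ C _, D, Sum.inl (Sum.inl w) => Sum.inl (compFrom C D (Sum.inl w))
  | joinL _ _ _, _, Sum.inl (Sum.inr u) => Sum.inr u
  | joinL _ C _, D, Sum.inr d => Sum.inl (compFrom C D (Sum.inr d))
  | joinR _ _ _, _, Sum.inl (Sum.inl u) => Sum.inl u
  | joinR _ _ C, D, Sum.inl (Sum.inr w) => Sum.inr (compFrom C D (Sum.inl w))
  | joinR _ _ C, D, Sum.inr d => Sum.inr (compFrom C D (Sum.inr d))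
  | recolor _ C, D, z => compFrom C D z

lemma compFrom_bij : ∀ (C D : Ctx k), Function.Bijective (compFrom C D)
  | hole, D => by
      constructor
      · rintro (e | x) (e' | y) h
        · exact e.elim
        · exact e.elim
        · exact e'.elim
        · exact congrArg Sum.inr h
      · exact fun v => ⟨Sum.inr v, rfl⟩
  | joinL S C s, D => by
      let e : ((C.W ⊕ s.V) ⊕ D.W) ≃ ((C.W ⊕ D.W) ⊕ s.V) :=
        { toFun := fun z => match z with
            | .inl (.inl w) => .inl (.inl w)
            | .inl (.inr u) => .inr u
            | .inr x => .inl (.inr x)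
          invFun := fun z => match z with
            | .inl (.inl w) => .inl (.inl w)
            | .inl (.inr x) => .inr x
            | .inr u => .inl (.inr u)
          left_inv := by rintro ((w | u) | x) <;> rfl
          right_inv := by rintro ((w | x) | u) <;> rfl }
      have hfe : compFrom (joinL S C s) D = (Sum.map (compFrom C D) id) ∘ e := by
        funext z
        rcases z with (w | u) | x <;> rfl
      rw [hfe]
      exact (((Equiv.ofBijective _ (compFrom_bij C D)).sumCongr (Equiv.refl s.V)).bijective).comp
        e.bijective
  | joinR S s C, D => by
      let e : ((s.V ⊕ C.W) ⊕ D.W) ≃ (s.V ⊕ (C.W ⊕ D.W)) :=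
        { toFun := fun z => match z with
            | .inl (.inl u) => .inl u
            | .inl (.inr w) => .inr (.inl w)
            | .inr x => .inr (.inr x)
          invFun := fun z => match z with
            | .inl u => .inl (.inl u)
            | .inr (.inl w) => .inl (.inr w)
            | .inr (.inr x) => .inr x
          left_inv := by rintro ((u | w) | x) <;> rfl
          right_inv := by rintro (u | (w | x)) <;> rfl }
      have hfe : compFrom (joinR S s C) D = (Sum.map id (compFrom C D)) ∘ e := by
        funext z
        rcases z with (u | w) | x <;> rfl
      rw [hfe]
      exact (((Equiv.refl s.V).sumCongr (Equiv.ofBijective _ (compFrom_bij C D))).bijective).comp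
        e.bijective
  | recolor R C, D => compFrom_bij C D

lemma col_comp : ∀ (C D : Ctx k) (z : C.W ⊕ D.W),
    (C.comp D).col (compFrom C D z) =
      Sum.elim C.col (fun w => C.rho (D.col w)) z
  | hole, D, Sum.inl e => e.elim
  | hole, D, Sum.inr w => rfl
  | joinL S C s, D, Sum.inl (Sum.inl w) => by
      exact col_comp C D (Sum.inl w)
  | joinL S C s, D, Sum.inl (Sum.inr u) => rfl
  | joinL S C s, D, Sum.inr d => by
      exact col_comp C D (Sum.inr d)
  | joinR S s C, D, Sum.inl (Sum.inl u) => rfl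
  | joinR S s C, D, Sum.inl (Sum.inr w) => by
      exact col_comp C D (Sum.inl w)
  | joinR S s C, D, Sum.inr d => by
      exact col_comp C D (Sum.inr d)
  | recolor R C, D, z => by
      have h := col_comp C D z
      rcases z with w | d <;>
        exact congrArg R h

lemma A_comp : ∀ (C D : Ctx k) (z : C.W ⊕ D.W) (c : Fin k),
    (C.comp D).A (compFrom C D z) c ↔
      Sum.elim (fun u => C.A u (D.rho c)) (fun w => D.A w c) z
  | hole, D, Sum.inl e, c => e.elim
  | hole, D, Sum.inr w, c => Iff.rfl
  | joinL S C s, D, Sum.inl (Sum.inl w), c => by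
      exact A_comp C D (Sum.inl w) c
  | joinL S C s, D, Sum.inl (Sum.inr u), c => by
      simp [compFrom, comp, A, rho_comp] <;> exact Iff.rfl
  | joinL S C s, D, Sum.inr d, c => by
      exact A_comp C D (Sum.inr d) c
  | joinR S s C, D, Sum.inl (Sum.inl u), c => by
      simp [compFrom, comp, A, rho_comp] <;> exact Iff.rfl
  | joinR S s C, D, Sum.inl (Sum.inr w), c => by
      exact A_comp C D (Sum.inl w) c
  | joinR S s C, D, Sum.inr d, c => by
      exact A_comp C D (Sum.inr d) c
  | recolor R C, D, z, c => A_comp C D z c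

lemma adj_comp : ∀ (C D : Ctx k) (z₁ z₂ : C.W ⊕ D.W),
    (C.comp D).graph.Adj (compFrom C D z₁) (compFrom C D z₂) ↔
      (gjoin C.graph D.graph C.A D.col (fun A c => A c)).Adj z₁ z₂ := by
  intro C
  induction C with
  | hole =>
      intro D z₁ z₂
      rcases z₁ with e | x
      · exact e.elim
      rcases z₂ with e | y
      · exact e.elim
      exact Iff.rfl
  | joinL S C s ih =>
      intro D z₁ z₂
      rcases z₁ with (w₁ | u₁) | x₁ <;> rcases z₂ with (w₂ | u₂) | x₂ <;>
        simp [compFrom, comp, graph, A, ih, col_comp, A_comp, col, rho] <;>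
          exact Iff.rfl
  | joinR S s C ih =>
      intro D z₁ z₂
      rcases z₁ with (u₁ | w₁) | x₁ <;> rcases z₂ with (u₂ | w₂) | x₂ <;>
        simp [compFrom, comp, graph, A, ih, col_comp, A_comp, col, rho] <;>
          exact Iff.rfl
  | recolor R C ih =>
      intro D z₁ z₂
      exact ih D z₁ z₂

lemma size_fill : ∀ (C : Ctx k) (t : NLCExpr k), (C.fill t).size = C.csize + t.size
  | hole, t => (Nat.zero_add _).symm
  | joinL S C s, t => by simp [fill, csize, NLCExpr.size, size_fill C t]; omega
  | joinR S s C, t => by simp [fill, csize, NLCExpr.size, size_fill C t]; omega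
  | recolor R C, t => size_fill C t

lemma expr_split_aux : ∀ (t : NLCExpr k) (m : ℕ), 2 ≤ m → t.size ≤ m → 2 * m < 3 * t.size →
    ∃ (C : Ctx k) (s : NLCExpr k), C.fill s = t ∧ 3 * s.size ≤ 2 * m ∧ m < 3 * s.size
  | NLCExpr.single c, m, hm, hle, hgt => by
      simp [NLCExpr.size] at hgt; omega
  | NLCExpr.recolor R t, m, hm, hle, hgt => by
      obtain ⟨C, s, h1, h2, h3⟩ :=
        expr_split_aux t m hm (by simpa [NLCExpr.size] using hle)
          (by simpa [NLCExpr.size] using hgt)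
      exact ⟨Ctx.recolor R C, s, by simp [fill, h1], h2, h3⟩
  | NLCExpr.join S a b, m, hm, hle, hgt => by
      have hab : a.size + b.size ≤ m := by simpa [NLCExpr.size] using hle
      by_cases ha : 2 * m < 3 * a.size
      · obtain ⟨C, s, h1, h2, h3⟩ := expr_split_aux a m hm (by omega) ha
        exact ⟨Ctx.joinL S C b, s, by simp [fill, h1], h2, h3⟩
      · by_cases hb : 2 * m < 3 * b.size
        · obtain ⟨C, s, h1, h2, h3⟩ := expr_split_aux b m hm (by omega) hb
          exact ⟨Ctx.joinR S a C, s, by simp [fill, h1], h2, h3⟩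
        · rcases le_total b.size a.size with h | h
          · refine ⟨Ctx.joinL S Ctx.hole b, a, rfl, by omega, ?_⟩
            have := hgt; simp [NLCExpr.size] at this; omega
          · refine ⟨Ctx.joinR S a Ctx.hole, b, rfl, by omega, ?_⟩
            have := hgt; simp [NLCExpr.size] at this; omega

lemma expr_split (t : NLCExpr k) (h2 : 2 ≤ t.size) :
    ∃ (C : Ctx k) (s : NLCExpr k), C.fill s = t ∧ 3 * s.size ≤ 2 * t.size ∧
      t.size < 3 * s.size ∧ C.csize + s.size = t.size := by
  obtain ⟨C, s, h1, h2', h3⟩ := expr_split_aux t t.size h2 le_rfl (by omega)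
  refine ⟨C, s, h1, h2', h3, ?_⟩
  have := size_fill C s
  rw [h1] at this
  omega

lemma spine_split : ∀ (C : Ctx k) (θ : ℕ), θ < C.csize →
    ∃ (P D : Ctx k) (S : Set (Fin k × Fin k)) (s : NLCExpr k),
      (C = P.comp (joinL S D s) ∨ C = P.comp (joinR S s D)) ∧
        D.csize ≤ θ ∧ θ < D.csize + s.size
  | hole, θ, h => by simp [csize] at h
  | joinL S C s, θ, h => by
      by_cases hC : C.csize ≤ θ
      · exact ⟨hole, C, S, s, Or.inl rfl, hC, by simpa [csize] using h⟩
      · obtain ⟨P, D, S', s', hor, h1, h2⟩ := spine_split C θ (by omega)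
        refine ⟨joinL S P s, D, S', s', ?_, h1, h2⟩
        rcases hor with h' | h'
        · exact Or.inl (by simp [comp, ← h'])
        · exact Or.inr (by simp [comp, ← h'])
  | joinR S s C, θ, h => by
      by_cases hC : C.csize ≤ θ
      · refine ⟨hole, C, S, s, Or.inr rfl, hC, ?_⟩
        simp only [csize] at h
        omega
      · obtain ⟨P, D, S', s', hor, h1, h2⟩ := spine_split C θ (by omega)
        refine ⟨joinR S s P, D, S', s', ?_, h1, h2⟩
        rcases hor with h' | h'
        · exact Or.inl (by simp [comp, ← h'])
        · exact Or.inr (by simp [comp, ← h'])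
  | recolor R C, θ, h => by
      obtain ⟨P, D, S', s', hor, h1, h2⟩ := spine_split C θ (by simpa [csize] using h)
      refine ⟨recolor R P, D, S', s', ?_, h1, h2⟩
      rcases hor with h' | h'
      · exact Or.inl (by simp [comp, ← h'])
      · exact Or.inr (by simp [comp, ← h'])

end Ctx

def sfun : ℕ → ℕ
  | 0 => 1
  | j + 1 => sfun j + sfun j / 2 + 1

lemma sfun_pos (j : ℕ) : 1 ≤ sfun j := by
  cases j <;> simp [sfun]

lemma sfun_step {j x m : ℕ} (hm : m ≤ sfun (j + 1)) (hx : 3 * x ≤ 2 * m) : x ≤ sfun j := by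
  have : sfun (j + 1) = sfun j + sfun j / 2 + 1 := rfl
  omega

lemma sfun_two_step (j : ℕ) : 2 * sfun j ≤ sfun (j + 2) := by
  have h1 : sfun (j + 1) = sfun j + sfun j / 2 + 1 := rfl
  have h2 : sfun (j + 2) = sfun (j + 1) + sfun (j + 1) / 2 + 1 := rfl
  omega

lemma sfun_pow (j : ℕ) : 2 ^ j ≤ sfun (2 * j) := by
  induction j with
  | zero => simp [sfun]
  | succ j ih =>
      have := sfun_two_step (2 * j)
      have : 2 * 2 ^ j ≤ sfun (2 * j + 2) := le_trans (by omega) this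
      calc 2 ^ (j + 1) = 2 * 2 ^ j := by ring
        _ ≤ sfun (2 * j + 2) := this
        _ = sfun (2 * (j + 1)) := by ring_nf

-- ============ realization framework ============

abbrev Col (k : ℕ) : Type := Fin k × (Fin k → Prop) × Prop

def Realizes {k : ℕ} (T : CTree (Col k)) {β : Type} (G : SimpleGraph β) (f : β → Col k) : Prop :=
  ∃ e : β ≃ T.V, (∀ x y, G.Adj x y ↔ T.graph.Adj (e x) (e y)) ∧ ∀ v, T.col (e v) = f v

lemma Realizes.of_iso' {k : ℕ} {T : CTree (Col k)} {β β' : Type} {G : SimpleGraph β}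
    {f : β → Col k} {G' : SimpleGraph β'} {f' : β' → Col k} (h : Realizes T G f) (e : β ≃ β')
    (hadj : ∀ x y : β, G'.Adj (e x) (e y) ↔ G.Adj x y) (hcol : ∀ v : β, f' (e v) = f v) :
    Realizes T G' f' := by
  obtain ⟨e₀, ha, hc⟩ := h
  refine ⟨e.symm.trans e₀, fun x y => ?_, fun v => ?_⟩
  · have hx := hadj (e.symm x) (e.symm y)
    simp only [Equiv.apply_symm_apply] at hx
    exact hx.trans (ha _ _)
  · have hv := hcol (e.symm v)
    simp only [Equiv.apply_symm_apply] at hv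
    exact (hc _).trans hv.symm

lemma realizes_node {k : ℕ} {β₁ β₂ β : Type} {G : SimpleGraph β} {f : β → Col k}
    {G₁ : SimpleGraph β₁} {f₁ : β₁ → Col k} {G₂ : SimpleGraph β₂} {f₂ : β₂ → Col k}
    {T₁ T₂ : CTree (Col k)} (S : Col k → Col k → Prop) (R : Col k → Col k)
    (e : (β₁ ⊕ β₂) ≃ β)
    (hadj : ∀ z₁ z₂, G.Adj (e z₁) (e z₂) ↔ (gjoin G₁ G₂ f₁ f₂ S).Adj z₁ z₂)
    (hcol : ∀ z, f (e z) = R (Sum.elim f₁ f₂ z))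
    (h₁ : Realizes T₁ G₁ f₁) (h₂ : Realizes T₂ G₂ f₂) :
    Realizes (CTree.node S R T₁ T₂) G f := by
  obtain ⟨e₁, ha₁, hc₁⟩ := h₁
  obtain ⟨e₂, ha₂, hc₂⟩ := h₂
  refine ⟨e.symm.trans (e₁.sumCongr e₂), fun x y => ?_, fun v => ?_⟩
  · have hx : x = e (e.symm x) := (e.apply_symm_apply x).symm
    have hy : y = e (e.symm y) := (e.apply_symm_apply y).symm
    rw [hx, hy, hadj]
    simp only [Equiv.trans_apply, Equiv.apply_symm_apply, Equiv.symm_apply_apply]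
    show _ ↔ (gjoin T₁.graph T₂.graph T₁.col T₂.col S).Adj (e₁.sumCongr e₂ (e.symm x))
      (e₁.sumCongr e₂ (e.symm y))
    rcases e.symm x with a | a <;> rcases e.symm y with b | b <;>
      simp only [CTree.graph, Equiv.sumCongr_apply, Sum.map_inl, Sum.map_inr, gjoin_adj_ll,
        gjoin_adj_rr, gjoin_adj_lr, gjoin_adj_rl, hc₁, hc₂] <;>
      [exact ha₁ a b;
       exact ha₂ a b]
  · have hv : v = e (e.symm v) := (e.apply_symm_apply v).symm
    rw [hv, hcol]
    simp only [Equiv.trans_apply, Equiv.apply_symm_apply, Equiv.symm_apply_apply]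
    show R (Sum.elim T₁.col T₂.col (e₁.sumCongr e₂ (e.symm v))) = _
    rcases e.symm v with a | a
    · exact congrArg R (hc₁ a)
    · exact congrArg R (hc₂ a)

def REal {k : ℕ} (t : NLCExpr k) (d : ℕ) : Prop := ∀ g : Fin k → Col k,
  ∃ T : CTree (Col k), Realizes T t.graph (fun v => g (t.coloring v)) ∧ T.depth ≤ d

def RCtx {k : ℕ} (C : Ctx k) (d : ℕ) : Prop := ∀ (σ τ : Fin k → Fin k) (b : Prop),
  ∃ T : CTree (Col k),
    Realizes T C.graph (fun w => (σ (C.col w), fun c => C.A w (τ c), b)) ∧ T.depth ≤ d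

lemma REal.mono {k : ℕ} {t : NLCExpr k} {d d' : ℕ} (h : REal t d) (hd : d ≤ d') : REal t d' :=
  fun g => by obtain ⟨T, h1, h2⟩ := h g; exact ⟨T, h1, h2.trans hd⟩

lemma RCtx.mono {k : ℕ} {C : Ctx k} {d d' : ℕ} (h : RCtx C d) (hd : d ≤ d') : RCtx C d' :=
  fun σ τ b => by obtain ⟨T, h1, h2⟩ := h σ τ b; exact ⟨T, h1, h2.trans hd⟩

lemma REal_single {k : ℕ} : ∀ t : NLCExpr k, t.size = 1 → REal t 0
  | NLCExpr.single c, _ => by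
      intro g
      refine ⟨CTree.leaf (g c), ⟨Equiv.refl Unit, fun x y => ?_, fun v => rfl⟩, le_refl 0⟩
      simp [NLCExpr.graph, CTree.graph]
  | NLCExpr.join S a b, h => by
      have := a.one_le_size; have := b.one_le_size
      simp [NLCExpr.size] at h; omega
  | NLCExpr.recolor R t, h => by
      intro g
      exact REal_single t h (fun c => g (R c))

lemma isEmpty_W {k : ℕ} (C : Ctx k) (h : C.csize = 0) : IsEmpty C.W := by
  letI := C.fintypeW
  rw [← Ctx.card_W C _] at h
  exact Fintype.card_eq_zero_iff.mp h

lemma RCtx_one {k : ℕ} (C : Ctx k) (h : C.csize = 1) : RCtx C 0 := by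
  intro σ τ b
  letI := C.fintypeW
  have hc : Fintype.card C.W = 1 := (Ctx.card_W C _).trans h
  obtain ⟨w₀, hw⟩ := Fintype.card_eq_one_iff.mp hc
  refine ⟨CTree.leaf (σ (C.col w₀), fun c => C.A w₀ (τ c), b),
    ⟨⟨fun _ => (), fun _ => w₀, fun w => (hw w).symm, fun u => rfl⟩, fun x y => ?_, fun v => ?_⟩,
    le_refl 0⟩
  · have hxy : x = y := (hw x).trans (hw y).symm
    subst hxy
    simp [CTree.graph]
  · rw [hw v]
    rfl


open Ctx in
lemma REal_node {k : ℕ} {C : Ctx k} {s : NLCExpr k} {d₁ d₂ : ℕ}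
    (hC : RCtx C d₁) (hs : REal s d₂) : REal (C.fill s) (max d₁ d₂ + 1) := by
  intro g
  obtain ⟨T₁, h₁, hd₁⟩ := hC id id True
  obtain ⟨T₂, h₂, hd₂⟩ := hs (fun c => ((c, fun _ => False, False) : Col k))
  classical
  refine ⟨CTree.node (fun p q => p.2.1 q.1)
      (fun p => if p.2.2 then g p.1 else g (C.rho p.1)) T₁ T₂,
    realizes_node _ _ (Ctx.fillEquiv C s) (fun z₁ z₂ => ?_) (fun z => ?_) h₁ h₂, ?_⟩
  · rw [fillEquiv_apply, fillEquiv_apply, Ctx.fill_adj]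
    rcases z₁ with w | x <;> rcases z₂ with w' | x' <;> exact Iff.rfl
  · rw [fillEquiv_apply, Ctx.fill_coloring]
    rcases z with w | x
    · exact (if_pos trivial).symm
    · exact (if_neg (fun h => h)).symm
  · simp only [CTree.depth]
    omega

open Ctx in
lemma RCtx_joinL {k : ℕ} {D : Ctx k} {S : Set (Fin k × Fin k)} {s : NLCExpr k} {d₁ d₂ : ℕ}
    (hD : RCtx D d₁) (hs : REal s d₂) : RCtx (Ctx.joinL S D s) (max d₁ d₂ + 1) := by
  intro σ τ b
  obtain ⟨T₁, h₁, hd₁⟩ := hD id τ False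
  obtain ⟨T₂, h₂, hd₂⟩ := hs (fun c => ((c, fun _ => False, True) : Col k))
  classical
  refine ⟨CTree.node (fun p q => (p.1, q.1) ∈ S)
      (fun p => if p.2.2 then (σ p.1, fun c => (D.rho (τ c), p.1) ∈ S, b) else (σ p.1, p.2.1, b))
      T₁ T₂,
    realizes_node _ _ (Equiv.refl (D.W ⊕ s.V)) (fun z₁ z₂ => ?_) (fun z => ?_) h₁ h₂, ?_⟩
  · rcases z₁ with w | x <;> rcases z₂ with w' | x' <;> exact Iff.rfl
  · rcases z with w | x
    · exact (if_neg (fun h => h)).symm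
    · exact (if_pos trivial).symm
  · simp only [CTree.depth]
    omega

open Ctx in
lemma RCtx_joinR {k : ℕ} {D : Ctx k} {S : Set (Fin k × Fin k)} {s : NLCExpr k} {d₁ d₂ : ℕ}
    (hD : RCtx D d₁) (hs : REal s d₂) : RCtx (Ctx.joinR S s D) (max d₁ d₂ + 1) := by
  intro σ τ b
  obtain ⟨T₁, h₁, hd₁⟩ := hs (fun c => ((c, fun _ => False, True) : Col k))
  obtain ⟨T₂, h₂, hd₂⟩ := hD id τ False
  classical
  refine ⟨CTree.node (fun p q => (p.1, q.1) ∈ S)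
      (fun p => if p.2.2 then (σ p.1, fun c => (p.1, D.rho (τ c)) ∈ S, b) else (σ p.1, p.2.1, b))
      T₁ T₂,
    realizes_node _ _ (Equiv.refl (s.V ⊕ D.W)) (fun z₁ z₂ => ?_) (fun z => ?_) h₁ h₂, ?_⟩
  · rcases z₁ with x | w <;> rcases z₂ with x' | w' <;> exact Iff.rfl
  · rcases z with x | w
    · exact (if_pos trivial).symm
    · exact (if_neg (fun h => h)).symm
  · simp only [CTree.depth]
    omega

open Ctx in
lemma RCtx_joinL_empty {k : ℕ} {D : Ctx k} {S : Set (Fin k × Fin k)} {s : NLCExpr k} {d : ℕ}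
    (h0 : D.csize = 0) (hs : REal s d) : RCtx (Ctx.joinL S D s) d := by
  intro σ τ b
  obtain ⟨T, h, hd⟩ := hs (fun c => ((σ c, fun c' => (D.rho (τ c'), c) ∈ S, b) : Col k))
  haveI := isEmpty_W D h0
  refine ⟨T, h.of_iso' ⟨Sum.inr, Sum.elim (fun u => isEmptyElim u) id, fun v => rfl,
      fun z => ?_⟩ (fun x y => Iff.rfl) (fun v => rfl), hd⟩
  rcases z with u | v
  · exact isEmptyElim u
  · rfl

open Ctx in
lemma RCtx_joinR_empty {k : ℕ} {D : Ctx k} {S : Set (Fin k × Fin k)} {s : NLCExpr k} {d : ℕ}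
    (h0 : D.csize = 0) (hs : REal s d) : RCtx (Ctx.joinR S s D) d := by
  intro σ τ b
  obtain ⟨T, h, hd⟩ := hs (fun c => ((σ c, fun c' => (c, D.rho (τ c')) ∈ S, b) : Col k))
  haveI := isEmpty_W D h0
  refine ⟨T, h.of_iso' ⟨Sum.inl, Sum.elim id (fun u => isEmptyElim u), fun v => rfl,
      fun z => ?_⟩ (fun x y => Iff.rfl) (fun v => rfl), hd⟩
  rcases z with v | u
  · rfl
  · exact isEmptyElim u

open Ctx in
lemma RCtx_comp {k : ℕ} {P M : Ctx k} {d₁ d₂ : ℕ}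
    (hP : RCtx P d₁) (hM : RCtx M d₂) : RCtx (P.comp M) (max d₁ d₂ + 1) := by
  intro σ τ b
  obtain ⟨T₁, h₁, hd₁⟩ := hP σ id False
  obtain ⟨T₂, h₂, hd₂⟩ := hM id τ True
  classical
  refine ⟨CTree.node (fun p q => p.2.1 q.1)
      (fun p => if p.2.2 then (σ (P.rho p.1), p.2.1, b)
        else (p.1, fun c => p.2.1 (M.rho (τ c)), b)) T₁ T₂,
    realizes_node _ _ (Equiv.ofBijective _ (Ctx.compFrom_bij P M))
      (fun z₁ z₂ => ?_) (fun z => ?_) h₁ h₂, ?_⟩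
  · have := Ctx.adj_comp P M z₁ z₂
    rw [show (Equiv.ofBijective _ (Ctx.compFrom_bij P M)) z₁ = Ctx.compFrom P M z₁ from rfl,
      show (Equiv.ofBijective _ (Ctx.compFrom_bij P M)) z₂ = Ctx.compFrom P M z₂ from rfl, this]
    rcases z₁ with u | w <;> rcases z₂ with u' | w' <;> exact Iff.rfl
  · rw [show (Equiv.ofBijective _ (Ctx.compFrom_bij P M)) z = Ctx.compFrom P M z from rfl]
    rcases z with u | w
    · have hA : (fun c => (P.comp M).A (Ctx.compFrom P M (Sum.inl u)) (τ c))
          = fun c => P.A u (M.rho (τ c)) := by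
        funext c; exact propext (Ctx.A_comp P M (Sum.inl u) (τ c))
      show (σ ((P.comp M).col (Ctx.compFrom P M (Sum.inl u))),
        (fun c => (P.comp M).A (Ctx.compFrom P M (Sum.inl u)) (τ c)), b) = _
      rw [Ctx.col_comp, hA]
      simp
    · have hA : (fun c => (P.comp M).A (Ctx.compFrom P M (Sum.inr w)) (τ c))
          = fun c => M.A w (τ c) := by
        funext c; exact propext (Ctx.A_comp P M (Sum.inr w) (τ c))
      show (σ ((P.comp M).col (Ctx.compFrom P M (Sum.inr w))),
        (fun c => (P.comp M).A (Ctx.compFrom P M (Sum.inr w)) (τ c)), b) = _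
      rw [Ctx.col_comp, hA]
      simp
  · simp only [CTree.depth]
    omega

open Ctx in
lemma RCtx_comp_left_empty {k : ℕ} {P M : Ctx k} {d : ℕ}
    (h0 : P.csize = 0) (hM : RCtx M d) : RCtx (P.comp M) d := by
  intro σ τ b
  obtain ⟨T, h, hd⟩ := hM (fun c => σ (P.rho c)) τ b
  haveI := isEmpty_W P h0
  refine ⟨T, h.of_iso' ⟨fun w => Ctx.compFrom P M (Sum.inr w), ?_, ?_, ?_⟩
      (fun x y => ?_) (fun v => ?_), hd⟩
  · exact fun x => Sum.elim (fun u => isEmptyElim u) id ((Equiv.ofBijective _ (Ctx.compFrom_bij P M)).symm x)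
  · intro w
    show Sum.elim _ id ((Equiv.ofBijective _ (Ctx.compFrom_bij P M)).symm
      ((Equiv.ofBijective _ (Ctx.compFrom_bij P M)) (Sum.inr w))) = w
    rw [Equiv.symm_apply_apply]
    rfl
  · intro x
    show Ctx.compFrom P M (Sum.inr (Sum.elim _ id
      ((Equiv.ofBijective _ (Ctx.compFrom_bij P M)).symm x))) = x
    rcases hz : (Equiv.ofBijective _ (Ctx.compFrom_bij P M)).symm x with u | w
    · exact isEmptyElim u
    · have : x = (Equiv.ofBijective _ (Ctx.compFrom_bij P M)) (Sum.inr w) := by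
        rw [← hz, Equiv.apply_symm_apply]
      rw [this]
      rfl
  · have := Ctx.adj_comp P M (Sum.inr x) (Sum.inr y)
    exact this.trans Iff.rfl
  · have hA : (fun c => (P.comp M).A (Ctx.compFrom P M (Sum.inr v)) (τ c))
        = fun c => M.A v (τ c) := by
      funext c; exact propext (Ctx.A_comp P M (Sum.inr v) (τ c))
    simp only [Equiv.coe_fn_mk]
    rw [Ctx.col_comp, hA]
    simp

lemma main_induction {k : ℕ} : ∀ j : ℕ,
    (∀ t : NLCExpr k, t.size ≤ sfun j → REal t (3 * j)) ∧
    (∀ C : Ctx k, 1 ≤ C.csize → C.csize ≤ sfun j → RCtx C (3 * j + 2)) := by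
  intro j
  induction j with
  | zero =>
      constructor
      · intro t ht
        have h1 : t.size = 1 := by have := t.one_le_size; simp [sfun] at ht; omega
        exact REal_single t h1
      · intro C h1 h2
        have : C.csize = 1 := by simp [sfun] at h2; omega
        exact (RCtx_one C this).mono (by omega)
  | succ j ih =>
      obtain ⟨pe, pc⟩ := ih
      have pe' : ∀ t : NLCExpr k, t.size ≤ sfun (j + 1) → REal t (3 * (j + 1)) := by
        intro t ht
        by_cases h2 : 2 ≤ t.size
        · obtain ⟨C, s, hfill, hb1, hb2, hb3⟩ := Ctx.expr_split t h2
          have hsC : C.csize ≤ sfun j := sfun_step ht (by omega)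
          have hsS : s.size ≤ sfun j := sfun_step ht (by omega)
          have h1C : 1 ≤ C.csize := by omega
          have hcomb := REal_node (pc C h1C hsC) (pe s hsS)
          rw [hfill] at hcomb
          exact hcomb.mono (by omega)
        · have h1 : t.size = 1 := by have := t.one_le_size; omega
          exact (REal_single t h1).mono (by omega)
      refine ⟨pe', ?_⟩
      intro C h1 hsz
      by_cases h2 : 2 ≤ C.csize
      · have hθ : 2 * C.csize / 3 < C.csize := by omega
        obtain ⟨P, D, S, s, hor, hD, hDs⟩ := Ctx.spine_split C (2 * C.csize / 3) hθ
        rcases hor with h | h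
        · have hm : C.csize = P.csize + D.csize + s.size := by
            rw [h, Ctx.csize_comp]; simp [Ctx.csize]; omega
          have hsD : D.csize ≤ sfun j := sfun_step hsz (by omega)
          have hsP : P.csize ≤ sfun j := sfun_step hsz (by omega)
          have hsS : s.size ≤ sfun (j + 1) := by omega
          have hM : RCtx (Ctx.joinL S D s) (3 * j + 4) := by
            by_cases hD0 : D.csize = 0
            · exact (RCtx_joinL_empty hD0 (pe' s hsS)).mono (by omega)
            · exact (RCtx_joinL (pc D (by omega) hsD) (pe' s hsS)).mono (by omega)
          rw [h]
          by_cases hP0 : P.csize = 0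
          · exact (RCtx_comp_left_empty hP0 hM).mono (by omega)
          · exact (RCtx_comp (pc P (by omega) hsP) hM).mono (by omega)
        · have hm : C.csize = P.csize + D.csize + s.size := by
            rw [h, Ctx.csize_comp]; simp [Ctx.csize]; omega
          have hsD : D.csize ≤ sfun j := sfun_step hsz (by omega)
          have hsP : P.csize ≤ sfun j := sfun_step hsz (by omega)
          have hsS : s.size ≤ sfun (j + 1) := by omega
          have hM : RCtx (Ctx.joinR S s D) (3 * j + 4) := by
            by_cases hD0 : D.csize = 0
            · exact (RCtx_joinR_empty hD0 (pe' s hsS)).mono (by omega)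
            · exact (RCtx_joinR (pc D (by omega) hsD) (pe' s hsS)).mono (by omega)
          rw [h]
          by_cases hP0 : P.csize = 0
          · exact (RCtx_comp_left_empty hP0 hM).mono (by omega)
          · exact (RCtx_comp (pc P (by omega) hsP) hM).mono (by omega)
      · have hc1 : C.csize = 1 := by omega
        exact (RCtx_one C hc1).mono (by omega)

lemma ctree_to_nlctree {k K : ℕ} (f : Col k → Fin K) (g : Fin K → Col k)
    (hgf : ∀ x, g (f x) = x) :
    ∀ T : CTree (Col k), ∃ (T' : NLCTree K) (e : T.V ≃ T'.V),
      (∀ x y, T.graph.Adj x y ↔ T'.graph.Adj (e x) (e y)) ∧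
      (∀ v, T'.coloring (e v) = f (T.col v)) ∧ T'.depth = T.depth
  | CTree.leaf c => by
      refine ⟨NLCTree.leaf (f c), Equiv.refl Unit, fun x y => Iff.rfl, fun v => rfl, rfl⟩
  | CTree.node S R l r => by
      obtain ⟨l', e₁, ha₁, hc₁, hd₁⟩ := ctree_to_nlctree f g hgf l
      obtain ⟨r', e₂, ha₂, hc₂, hd₂⟩ := ctree_to_nlctree f g hgf r
      refine ⟨NLCTree.node {p | S (g p.1) (g p.2)} (some (fun c => f (R (g c)))) l' r',
        e₁.sumCongr e₂, fun x y => ?_, fun v => ?_, ?_⟩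
      · rcases x with x | x <;> rcases y with y | y
        · exact ha₁ x y
        · show S (l.col x) (r.col y) ↔ S (g (l'.coloring (e₁ x))) (g (r'.coloring (e₂ y)))
          rw [hc₁, hc₂, hgf, hgf]
        · show S (l.col y) (r.col x) ↔ S (g (l'.coloring (e₁ y))) (g (r'.coloring (e₂ x)))
          rw [hc₁, hc₂, hgf, hgf]
        · exact ha₂ x y
      · rcases v with x | x
        · show f (R (g (l'.coloring (e₁ x)))) = f (R (l.col x))
          rw [hc₁, hgf]
        · show f (R (g (r'.coloring (e₂ x)))) = f (R (r.col x))
          rw [hc₂, hgf]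
      · show max l'.depth r'.depth + 1 = max l.depth r.depth + 1
        rw [hd₁, hd₂]


/-- For every `k ≥ 1` there is a constant `C = C(k)` such that every finite simple graph on
`n ≥ 2` vertices of NLC-width at most `k` admits an NLC-decomposition tree of width
`k · 2^(k+1)` and depth at most `C · log₂ n`. -/
theorem exists_log_depth_NLC_decomposition :
    ∀ k : ℕ, 1 ≤ k → ∃ C : ℕ, 0 < C ∧
      ∀ (V : Type) [Fintype V] (G : SimpleGraph V) (n : ℕ),
        Fintype.card V = n → 2 ≤ n → HasNLCWidthLE G k →
        ∃ T : NLCTree (k * 2 ^ (k + 1)),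
          Nonempty (G ≃g T.graph) ∧ T.depth ≤ C * Nat.log 2 n := by
  intro k hk
  refine ⟨12, by norm_num, ?_⟩
  intro V _ G n hcard hn hw
  obtain ⟨t, ⟨iso⟩⟩ := hw
  have hsize : t.size = n := by
    letI := t.fintypeV
    have h1 : Fintype.card t.V = t.size := NLCExpr.card_V t _
    have h2 : Fintype.card V = Fintype.card t.V := Fintype.card_congr iso.toEquiv
    omega
  have hlog : n < 2 ^ (Nat.log 2 n + 1) := Nat.lt_pow_succ_log_self (by norm_num) n
  have hpow := sfun_pow (Nat.log 2 n + 1)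
  have hle : t.size ≤ sfun (2 * (Nat.log 2 n + 1)) := by omega
  obtain ⟨T, hreal, hdep⟩ := (main_induction (k := k) (2 * (Nat.log 2 n + 1))).1 t hle
    (fun c => ((c, fun _ => False, False) : Col k))
  have hcardCol : Fintype.card (Col k) = k * 2 ^ (k + 1) := by
    simp [pow_succ]
    try ring
  let φ : Col k ≃ Fin (k * 2 ^ (k + 1)) := Fintype.equivFinOfCardEq hcardCol
  obtain ⟨T', e', ha', hc', hd'⟩ := ctree_to_nlctree φ φ.symm (fun x => φ.symm_apply_apply x) T
  obtain ⟨e₀, ha₀, hc₀⟩ := hreal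
  refine ⟨T', ⟨⟨iso.toEquiv.trans (e₀.trans e'), @fun a b => ?_⟩⟩, ?_⟩
  · simp only [Equiv.trans_apply]
    exact ((ha' _ _).symm.trans ((ha₀ _ _).symm.trans iso.map_rel_iff))
  · have hlogpos : 0 < Nat.log 2 n := Nat.log_pos (by norm_num) hn
    omega
end

section
/- Every connected cograph has a rooted spanning tree of depth at most 2 in which every node at depth 1 has at most one child. Equivalently: for every connected cograph G with at least one vertex, there exist a vertex r of G, a subset A of the neighbors of r, and an injective map f from V(G) \ ({r} ∪ A) to A such that every vertex v in the domain of f is adjacent to f(v) in G. -/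
/-- `CographOn G s` says that the subgraph of `G` induced by `s` can be obtained from
single vertices by disjoint unions (no edges between the parts) and joins (all edges
between the parts). -/
inductive CographOn {V : Type*} (G : SimpleGraph V) : Set V → Prop
  | single (v : V) : CographOn G {v}
  | union {A B : Set V} (hd : Disjoint A B) (h : ∀ a ∈ A, ∀ b ∈ B, ¬ G.Adj a b)
      (hA : CographOn G A) (hB : CographOn G B) : CographOn G (A ∪ B)
  | join {A B : Set V} (hd : Disjoint A B) (h : ∀ a ∈ A, ∀ b ∈ B, G.Adj a b)
      (hA : CographOn G A) (hB : CographOn G B) : CographOn G (A ∪ B)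

/-- A graph is a cograph if it belongs to the smallest class of graphs containing the
one-vertex graph and closed under disjoint union and join. -/
def IsCograph {V : Type*} (G : SimpleGraph V) : Prop :=
  CographOn G Set.univ

lemma CographOn.nonempty {V : Type*} {G : SimpleGraph V} {s : Set V}
    (h : CographOn G s) : s.Nonempty := by
  induction h with
  | single v => exact ⟨v, rfl⟩
  | union hd h hA hB ihA ihB => exact ihA.mono Set.subset_union_left
  | join hd h hA hB ihA ihB => exact ihA.mono Set.subset_union_left

lemma walk_stays {V : Type*} {G : SimpleGraph V} {A B : Set V}
    (h : ∀ a ∈ A, ∀ b ∈ B, ¬ G.Adj a b) (hcov : A ∪ B = Set.univ)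
    {a b : V} (w : G.Walk a b) (ha : a ∈ A) : b ∈ A := by
  induction w with
  | nil => exact ha
  | @cons u c d hadj p ih =>
    have hc : c ∈ A ∪ B := hcov ▸ Set.mem_univ c
    rcases hc with hc | hc
    · exact ih hc
    · exact absurd hadj (h u ha c hc)

lemma join_case {V : Type*} [Fintype V] (G : SimpleGraph V) {A B : Set V}
    (hd : Disjoint A B) (h : ∀ a ∈ A, ∀ b ∈ B, G.Adj a b) (hcov : A ∪ B = Set.univ)
    (hA : A.Nonempty) (hB : B.Nonempty) (hle : A.ncard ≤ B.ncard) :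
    ∃ (r : V) (A' : Set V), A' ⊆ G.neighborSet r ∧
      ∃ f : {v : V // v ≠ r ∧ v ∉ A'} → A',
        Function.Injective f ∧ ∀ v : {v : V // v ≠ r ∧ v ∉ A'}, G.Adj (v : V) (f v : V) := by
  classical
  obtain ⟨r, hr⟩ := hA
  refine ⟨r, B, fun b hb => h r hr b hb, ?_⟩
  have hset : {v : V | v ≠ r ∧ v ∉ B} = A \ {r} := by
    ext v
    constructor
    · rintro ⟨h1, h2⟩
      have hv : v ∈ A ∪ B := hcov ▸ Set.mem_univ v
      exact ⟨hv.resolve_right h2, h1⟩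
    · rintro ⟨hvA, hv⟩
      exact ⟨hv, fun hvB => Set.disjoint_left.mp hd hvA hvB⟩
  have hcard : Nat.card {v : V // v ≠ r ∧ v ∉ B} ≤ Nat.card B := by
    have h1 : Nat.card {v : V // v ≠ r ∧ v ∉ B} = (A \ {r}).ncard := by
      rw [show {v : V // v ≠ r ∧ v ∉ B} = ↥{v : V | v ≠ r ∧ v ∉ B} from rfl, hset,
        Nat.card_coe_set_eq]
    have h2 : (A \ {r}).ncard < A.ncard :=
      Set.ncard_diff_singleton_lt_of_mem hr (Set.toFinite A)
    rw [h1, Nat.card_coe_set_eq]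
    omega
  have : Nonempty ({v : V // v ≠ r ∧ v ∉ B} ↪ B) := by
    rw [Nat.card_eq_fintype_card, Nat.card_eq_fintype_card] at hcard
    exact Function.Embedding.nonempty_of_card_le hcard
  obtain ⟨f⟩ := this
  refine ⟨f, f.injective, fun v => ?_⟩
  have hvA : (v : V) ∈ A := by
    have := v.2
    have hv : (v : V) ∈ {v : V | v ≠ r ∧ v ∉ B} := this
    rw [hset] at hv
    exact hv.1
  exact h v hvA (f v) (f v).2

/-- Every connected cograph has a rooted spanning tree of depth at most 2 in which every
node at depth 1 has at most one child: there are a root `r`, a set `A` of neighbors of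
`r` (the depth-1 nodes), and an injective assignment of the remaining vertices to
distinct elements of `A`, each remaining vertex being adjacent to the element it is
assigned to. -/
theorem connected_cograph_has_depth_two_spanning_tree
    (V : Type*) [Fintype V] (G : SimpleGraph V) (hG : IsCograph G) (hc : G.Connected) :
    ∃ (r : V) (A : Set V), A ⊆ G.neighborSet r ∧
      ∃ f : {v : V // v ≠ r ∧ v ∉ A} → A,
        Function.Injective f ∧ ∀ v : {v : V // v ≠ r ∧ v ∉ A}, G.Adj (v : V) (f v : V) := by
  classical
  have key : ∀ s : Set V, CographOn G s → s = Set.univ →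
      ∃ (r : V) (A : Set V), A ⊆ G.neighborSet r ∧
        ∃ f : {v : V // v ≠ r ∧ v ∉ A} → A,
          Function.Injective f ∧ ∀ v : {v : V // v ≠ r ∧ v ∉ A}, G.Adj (v : V) (f v : V) := by
    intro s hs
    induction hs with
    | single v =>
      intro heq
      refine ⟨v, ∅, by simp, fun x => absurd ?_ x.2.1, fun x y _ => absurd ?_ x.2.1,
        fun x => absurd ?_ x.2.1⟩ <;>
      · have : (x : V) ∈ ({v} : Set V) := heq ▸ Set.mem_univ _
        exact this
    | union hd h hA hB ihA ihB =>
      intro heq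
      exfalso
      obtain ⟨a, ha⟩ := hA.nonempty
      obtain ⟨b, hb⟩ := hB.nonempty
      obtain ⟨w⟩ := hc.preconnected a b
      exact Set.disjoint_left.mp hd (walk_stays h heq w ha) hb
    | @join A B hd h hA hB ihA ihB =>
      intro heq
      rcases le_total A.ncard B.ncard with hle | hle
      · exact join_case G hd h heq hA.nonempty hB.nonempty hle
      · exact join_case G hd.symm (fun b hb a ha => (h a ha b hb).symm)
          (Set.union_comm B A ▸ heq) hB.nonempty hA.nonempty hle
  exact key _ hG rfl
end

section
/- A finite simple graph is a cograph if and only if it contains no induced subgraph isomorphic to P₄, the path on four vertices. -/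
/-- `G` contains an induced path on four vertices. -/
def HasInducedP4 {V : Type*} (G : SimpleGraph V) : Prop :=
  ∃ v₁ v₂ v₃ v₄ : V, v₁ ≠ v₂ ∧ v₁ ≠ v₃ ∧ v₁ ≠ v₄ ∧ v₂ ≠ v₃ ∧ v₂ ≠ v₄ ∧ v₃ ≠ v₄ ∧
    G.Adj v₁ v₂ ∧ G.Adj v₂ v₃ ∧ G.Adj v₃ v₄ ∧
    ¬ G.Adj v₁ v₃ ∧ ¬ G.Adj v₁ v₄ ∧ ¬ G.Adj v₂ v₄

namespace CographAux

open Relation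

variable {V : Type*}

/-- `P₄` on four vertices all inside `s`. -/
def P4On (G : SimpleGraph V) (s : Set V) : Prop :=
  ∃ v₁ v₂ v₃ v₄ : V, v₁ ∈ s ∧ v₂ ∈ s ∧ v₃ ∈ s ∧ v₄ ∈ s ∧
    v₁ ≠ v₂ ∧ v₁ ≠ v₃ ∧ v₁ ≠ v₄ ∧ v₂ ≠ v₃ ∧ v₂ ≠ v₄ ∧ v₃ ≠ v₄ ∧
    G.Adj v₁ v₂ ∧ G.Adj v₂ v₃ ∧ G.Adj v₃ v₄ ∧
    ¬ G.Adj v₁ v₃ ∧ ¬ G.Adj v₁ v₄ ∧ ¬ G.Adj v₂ v₄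

/-- A single edge inside `s`. -/
def Step (G : SimpleGraph V) (s : Set V) (x y : V) : Prop := x ∈ s ∧ y ∈ s ∧ G.Adj x y

/-- Reachability within `s`. -/
def Reach (G : SimpleGraph V) (s : Set V) : V → V → Prop := ReflTransGen (Step G s)

/-- `G` restricted to `s` is connected (as a relation statement). -/
def ConnOn (G : SimpleGraph V) (s : Set V) : Prop := ∀ x ∈ s, ∀ y ∈ s, Reach G s x y

variable {G : SimpleGraph V}

lemma reach_symm {s : Set V} : Symmetric (Reach G s) := by
  haveI : Std.Symm (Step G s) := ⟨fun _ _ h => ⟨h.2.1, h.1, h.2.2.symm⟩⟩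
  exact fun x y h => (ReflTransGen.symmetric (r := Step G s)).symm x y h

lemma p4on_mono {s t : Set V} (hst : s ⊆ t) (h : P4On G s) : P4On G t := by
  obtain ⟨a, b, c, d, ha, hb, hc, hd, rest⟩ := h
  exact ⟨a, b, c, d, hst ha, hst hb, hst hc, hst hd, rest⟩

lemma p4on_compl {s : Set V} (h : P4On Gᶜ s) : P4On G s := by
  obtain ⟨a, b, c, d, ha, hb, hc, hd, hab, hac, had, hbc, hbd, hcd,
    e1, e2, e3, n1, n2, n3⟩ := h
  rw [SimpleGraph.compl_adj] at e1 e2 e3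
  simp only [SimpleGraph.compl_adj, not_and, not_not] at n1 n2 n3
  exact ⟨b, d, a, c, hb, hd, ha, hc, hbd, hab.symm, hbc, had.symm, hcd.symm, hac,
    n3 hbd, (n2 had).symm, n1 hac,
    fun h => e1.2 h.symm, e2.2, fun h => e3.2 h.symm⟩

lemma crossing {α : Type*} {r : α → α → Prop} {P : α → Prop} {a b : α}
    (h : ReflTransGen r a b) (ha : ¬ P a) (hb : P b) :
    ∃ y z, r y z ∧ ¬ P y ∧ P z := by
  have H : ∀ c, ReflTransGen r a c → P c → ∃ y z, r y z ∧ ¬ P y ∧ P z := by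
    intro c hc
    induction hc with
    | refl => exact fun hPa => absurd hPa ha
    | @tail b c hab hbc ih =>
      intro hPc
      by_cases hPb : P b
      · exact ih hPb
      · exact ⟨b, c, hbc, hPb, hPc⟩
  exact H b h hb

/-- If `z ≠ v` is reachable to `v` inside `s`, then some neighbour `w` of `v` is
reachable from `z` inside `s \ {v}`. -/
lemma reach_to_nbr {s : Set V} {z v : V} (hzv : z ≠ v) (h : Reach G s z v) :
    ∃ w, w ∈ s ∧ w ≠ v ∧ G.Adj v w ∧ Reach G (s \ {v}) z w := by
  have H : ∀ c, Reach G s z c →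
      (c ≠ v ∧ Reach G (s \ {v}) z c) ∨
      (∃ w, w ∈ s ∧ w ≠ v ∧ G.Adj v w ∧ Reach G (s \ {v}) z w) := by
    intro c hc
    induction hc with
    | refl => exact Or.inl ⟨hzv, ReflTransGen.refl⟩
    | @tail b c hab hbc ih =>
      obtain ⟨hb, hcs, hadj⟩ := hbc
      rcases ih with ⟨hbv, hr⟩ | hq
      · by_cases hcv : c = v
        · exact Or.inr ⟨b, hb, hbv, hcv ▸ hadj.symm, hr⟩
        · exact Or.inl ⟨hcv, hr.tail ⟨⟨hb, hbv⟩, ⟨hcs, hcv⟩, hadj⟩⟩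
      · exact Or.inr hq
  rcases H v h with ⟨hne, _⟩ | hq
  · exact absurd rfl hne
  · exact hq

/-- Seinsche's key step: if `G` on `s` is connected, `Gᶜ` on `s` is connected,
`s` is `P₄`-free, and deleting `v ∈ s` disconnects `G`, we get a contradiction. -/
lemma caseA {s : Set V} {v : V} (hP4 : ¬ P4On G s) (hconn : ConnOn G s)
    (hcop : ConnOn Gᶜ s) (hv : v ∈ s) (hnc : ¬ ConnOn G (s \ {v})) : False := by
  rw [ConnOn] at hnc
  push_neg at hnc
  obtain ⟨p, hp, q, hq, hpq⟩ := hnc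
  have hall : ∀ x ∈ s \ {v}, G.Adj v x := by
    by_contra hx
    push_neg at hx
    obtain ⟨x, hxs', hxv⟩ := hx
    have hxv' : x ≠ v := hxs'.2
    obtain ⟨w, hw, hwv, hvw, hrw⟩ := reach_to_nbr hxv' (hconn x hxs'.1 v hv)
    obtain ⟨y, z, ⟨hy', hz', hyz⟩, hvy, hvz⟩ :=
      crossing (P := fun u => G.Adj v u) hrw hxv hvw
    have hr0 : ∃ r0 ∈ s \ {v}, ¬ Reach G (s \ {v}) z r0 := by
      by_cases h1 : Reach G (s \ {v}) z p
      · exact ⟨q, hq, fun h2 => hpq ((reach_symm h1).trans h2)⟩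
      · exact ⟨p, hp, h1⟩
    obtain ⟨r0, hr0s, hzr0⟩ := hr0
    have hr0v : r0 ≠ v := hr0s.2
    obtain ⟨w', hw's, hw'v, hvw', hrw'⟩ := reach_to_nbr hr0v (hconn r0 hr0s.1 v hv)
    have hw'mem : w' ∈ s \ {v} := ⟨hw's, hw'v⟩
    have hnzw' : ¬ Reach G (s \ {v}) z w' := fun h => hzr0 (h.trans (reach_symm hrw'))
    have hzw' : ¬ G.Adj z w' := fun h => hnzw' (ReflTransGen.single ⟨hz', hw'mem, h⟩)
    have hzy : Reach G (s \ {v}) z y := ReflTransGen.single ⟨hz', hy', hyz.symm⟩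
    have hyw' : ¬ G.Adj y w' := fun h => hnzw' (hzy.tail ⟨hy', hw'mem, h⟩)
    have hzw'ne : z ≠ w' := fun h => hnzw' (h ▸ ReflTransGen.refl)
    have hyw'ne : y ≠ w' := fun h => hnzw' (h ▸ hzy)
    exact hP4 ⟨y, z, v, w', hy'.1, hz'.1, hv, hw's,
      hyz.ne, hy'.2, hyw'ne, hz'.2, hzw'ne, Ne.symm hw'v,
      hyz, hvz.symm, hvw',
      fun h => hvy h.symm, hyw', hzw'⟩
  have hiso : ∀ u, Reach Gᶜ s v u → u = v := by
    intro u hu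
    induction hu with
    | refl => rfl
    | @tail b c hab hbc ih =>
      exfalso
      obtain ⟨hb, hcs, hadj⟩ := hbc
      rw [ih] at hadj
      rw [SimpleGraph.compl_adj] at hadj
      exact hadj.2 (hall c ⟨hcs, fun h => hadj.1 h.symm⟩)
  exact hp.2 (hiso p (hcop v hv p hp.1))

lemma reach_pair {x y : V} (hxy : x ≠ y) (h : Reach G {x, y} x y) : G.Adj x y := by
  have H : ∀ c, Reach G {x, y} x c → c = x ∨ G.Adj x c := by
    intro c hc
    induction hc with
    | refl => exact Or.inl rfl
    | @tail b c hab hbc ih =>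
      obtain ⟨hb, hcs, hadj⟩ := hbc
      rw [Set.mem_insert_iff, Set.mem_singleton_iff] at hb hcs
      rcases hb with rfl | rfl
      · rcases hcs with rfl | rfl
        · exact absurd rfl hadj.ne
        · exact Or.inr hadj
      · rcases hcs with rfl | rfl
        · exact Or.inl rfl
        · exact absurd rfl hadj.ne
  rcases H y h with h' | h'
  · exact absurd h'.symm hxy
  · exact h'

lemma seinsche [Fintype V] :
    ∀ n, ∀ s : Set V, s.ncard = n → 2 ≤ n → ¬ P4On G s →
      ConnOn G s → ConnOn Gᶜ s → False := by
  intro n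
  induction n using Nat.strong_induction_on with
  | _ n ih =>
  intro s hcard hn hP4 hc hcc
  rcases eq_or_lt_of_le hn with h2 | h3
  · obtain ⟨x, y, hxy, rfl⟩ := Set.ncard_eq_two.mp (hcard.trans h2.symm)
    have hx : x ∈ ({x, y} : Set V) := Set.mem_insert _ _
    have hy : y ∈ ({x, y} : Set V) := Set.mem_insert_of_mem _ rfl
    have h1 := reach_pair hxy (hc x hx y hy)
    have h2' := reach_pair (G := Gᶜ) hxy (hcc x hx y hy)
    rw [SimpleGraph.compl_adj] at h2'
    exact h2'.2 h1
  · have hne : s.Nonempty := by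
      apply Set.nonempty_of_ncard_ne_zero
      omega
    obtain ⟨v, hv⟩ := hne
    have hcard' : (s \ {v}).ncard = n - 1 := by
      rw [Set.ncard_diff_singleton_of_mem hv]
      omega
    by_cases hc' : ConnOn G (s \ {v})
    · by_cases hcc' : ConnOn Gᶜ (s \ {v})
      · exact ih (n - 1) (by omega) (s \ {v}) hcard' (by omega)
          (fun h => hP4 (p4on_mono Set.diff_subset h)) hc' hcc'
      · have hGcc : ConnOn Gᶜᶜ s := by rw [compl_compl]; exact hc
        exact caseA (G := Gᶜ) (fun h => hP4 (p4on_compl h)) hcc hGcc hv hcc'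
    · exact caseA hP4 hc hcc hv hc'

lemma cographOn_of_p4free [Fintype V] :
    ∀ n, ∀ s : Set V, s.ncard = n → s.Nonempty → ¬ P4On G s → CographOn G s := by
  intro n
  induction n using Nat.strong_induction_on with
  | _ n ih =>
  intro s hcard hne hP4
  have hpos : 0 < n := hcard ▸ (Set.ncard_pos (Set.toFinite s)).mpr hne
  rcases Nat.lt_or_ge n 2 with h1 | h2
  · have : s.ncard = 1 := by omega
    obtain ⟨a, rfl⟩ := Set.ncard_eq_one.mp this
    exact CographOn.single a
  · have hsplit : ¬ ConnOn G s ∨ ¬ ConnOn Gᶜ s := by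
      by_contra h
      push_neg at h
      exact seinsche n s hcard h2 hP4 h.1 h.2
    rcases hsplit with h | h
    · rw [ConnOn] at h
      push_neg at h
      obtain ⟨p, hp, q, hq, hpq⟩ := h
      set A := {z | z ∈ s ∧ Reach G s p z} with hAdef
      have hAs : A ⊆ s := fun z hz => hz.1
      have hpA : p ∈ A := ⟨hp, ReflTransGen.refl⟩
      have hqB : q ∈ s \ A := ⟨hq, fun h => hpq h.2⟩
      have hedge : ∀ a ∈ A, ∀ b ∈ s \ A, ¬ G.Adj a b := by
        intro a ha b hb hadj
        exact hb.2 ⟨hb.1, ha.2.tail ⟨ha.1, hb.1, hadj⟩⟩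
      have hAcard : A.ncard < n :=
        hcard ▸ Set.ncard_lt_ncard
          ((Set.ssubset_iff_of_subset hAs).mpr ⟨q, hq, hqB.2⟩) (Set.toFinite s)
      have hBcard : (s \ A).ncard < n :=
        hcard ▸ Set.ncard_lt_ncard
          ((Set.ssubset_iff_of_subset Set.diff_subset).mpr
            ⟨p, hp, fun h => h.2 hpA⟩) (Set.toFinite s)
      have hA' := ih A.ncard hAcard A rfl ⟨p, hpA⟩ (fun h => hP4 (p4on_mono hAs h))
      have hB' := ih (s \ A).ncard hBcard (s \ A) rfl ⟨q, hqB⟩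
        (fun h => hP4 (p4on_mono Set.diff_subset h))
      have := CographOn.union Set.disjoint_sdiff_right hedge hA' hB'
      rwa [Set.union_diff_cancel hAs] at this
    · rw [ConnOn] at h
      push_neg at h
      obtain ⟨p, hp, q, hq, hpq⟩ := h
      set A := {z | z ∈ s ∧ Reach Gᶜ s p z} with hAdef
      have hAs : A ⊆ s := fun z hz => hz.1
      have hpA : p ∈ A := ⟨hp, ReflTransGen.refl⟩
      have hqB : q ∈ s \ A := ⟨hq, fun h => hpq h.2⟩
      have hedge : ∀ a ∈ A, ∀ b ∈ s \ A, G.Adj a b := by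
        intro a ha b hb
        by_contra hadj
        have hne' : a ≠ b := fun h => hb.2 (h ▸ ha)
        exact hb.2 ⟨hb.1, ha.2.tail ⟨ha.1, hb.1,
          (G.compl_adj a b).mpr ⟨hne', hadj⟩⟩⟩
      have hAcard : A.ncard < n :=
        hcard ▸ Set.ncard_lt_ncard
          ((Set.ssubset_iff_of_subset hAs).mpr ⟨q, hq, hqB.2⟩) (Set.toFinite s)
      have hBcard : (s \ A).ncard < n :=
        hcard ▸ Set.ncard_lt_ncard
          ((Set.ssubset_iff_of_subset Set.diff_subset).mpr
            ⟨p, hp, fun h => h.2 hpA⟩) (Set.toFinite s)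
      have hA' := ih A.ncard hAcard A rfl ⟨p, hpA⟩ (fun h => hP4 (p4on_mono hAs h))
      have hB' := ih (s \ A).ncard hBcard (s \ A) rfl ⟨q, hqB⟩
        (fun h => hP4 (p4on_mono Set.diff_subset h))
      have := CographOn.join Set.disjoint_sdiff_right hedge hA' hB'
      rwa [Set.union_diff_cancel hAs] at this

lemma not_p4on_of_cographOn {s : Set V} (h : CographOn G s) : ¬ P4On G s := by
  induction h with
  | single v =>
    rintro ⟨a, b, c, d, ha, hb, hc, hd, hab, -⟩
    rw [Set.mem_singleton_iff] at ha hb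
    exact hab (ha.trans hb.symm)
  | @union A B hd h hA hB ihA ihB =>
    rintro ⟨a, b, c, d, ha, hb, hc, hd', hab, hac, had, hbc, hbd, hcd,
      e1, e2, e3, n1, n2, n3⟩
    have same : ∀ x ∈ A ∪ B, ∀ y ∈ A ∪ B, G.Adj x y →
        (x ∈ A ∧ y ∈ A) ∨ (x ∈ B ∧ y ∈ B) := by
      intro x hx y hy hadj
      rcases hx with hx | hx <;> rcases hy with hy | hy
      · exact Or.inl ⟨hx, hy⟩
      · exact absurd hadj (h x hx y hy)
      · exact absurd hadj.symm (h y hy x hx)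
      · exact Or.inr ⟨hx, hy⟩
    rcases same a ha b hb e1 with ⟨h1, h2⟩ | ⟨h1, h2⟩
    · rcases same b hb c hc e2 with ⟨-, h3⟩ | ⟨h3, -⟩
      · rcases same c hc d hd' e3 with ⟨-, h4⟩ | ⟨h4, -⟩
        · exact ihA ⟨a, b, c, d, h1, h2, h3, h4, hab, hac, had, hbc, hbd, hcd,
            e1, e2, e3, n1, n2, n3⟩
        · exact Set.disjoint_left.mp hd h3 h4
      · exact Set.disjoint_left.mp hd h2 h3
    · rcases same b hb c hc e2 with ⟨h3, -⟩ | ⟨-, h3⟩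
      · exact Set.disjoint_left.mp hd h3 h2
      · rcases same c hc d hd' e3 with ⟨h4, -⟩ | ⟨-, h4⟩
        · exact Set.disjoint_left.mp hd h4 h3
        · exact ihB ⟨a, b, c, d, h1, h2, h3, h4, hab, hac, had, hbc, hbd, hcd,
            e1, e2, e3, n1, n2, n3⟩
  | @join A B hd h hA hB ihA ihB =>
    rintro ⟨a, b, c, d, ha, hb, hc, hd', hab, hac, had, hbc, hbd, hcd,
      e1, e2, e3, n1, n2, n3⟩
    have same : ∀ x ∈ A ∪ B, ∀ y ∈ A ∪ B, x ≠ y → ¬ G.Adj x y →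
        (x ∈ A ∧ y ∈ A) ∨ (x ∈ B ∧ y ∈ B) := by
      intro x hx y hy hne hadj
      rcases hx with hx | hx <;> rcases hy with hy | hy
      · exact Or.inl ⟨hx, hy⟩
      · exact absurd (h x hx y hy) hadj
      · exact absurd (h y hy x hx).symm hadj
      · exact Or.inr ⟨hx, hy⟩
    rcases same a ha c hc hac n1 with ⟨h1, h3⟩ | ⟨h1, h3⟩
    · rcases same a ha d hd' had n2 with ⟨-, h4⟩ | ⟨h1', -⟩
      · rcases same b hb d hd' hbd n3 with ⟨h2, -⟩ | ⟨-, h4'⟩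
        · exact ihA ⟨a, b, c, d, h1, h2, h3, h4, hab, hac, had, hbc, hbd, hcd,
            e1, e2, e3, n1, n2, n3⟩
        · exact Set.disjoint_left.mp hd h4 h4'
      · exact Set.disjoint_left.mp hd h1 h1'
    · rcases same a ha d hd' had n2 with ⟨h1', -⟩ | ⟨-, h4⟩
      · exact Set.disjoint_left.mp hd h1' h1
      · rcases same b hb d hd' hbd n3 with ⟨-, h4'⟩ | ⟨h2, -⟩
        · exact Set.disjoint_left.mp hd h4' h4
        · exact ihB ⟨a, b, c, d, h1, h2, h3, h4, hab, hac, had, hbc, hbd, hcd,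
            e1, e2, e3, n1, n2, n3⟩

end CographAux

/-- A (nonempty) finite simple graph is a cograph if and only if it contains no induced
subgraph isomorphic to `P₄`, the path on four vertices. -/
theorem isCograph_iff_P4_free (V : Type*) [Fintype V] [Nonempty V] (G : SimpleGraph V) :
    IsCograph G ↔ ¬ HasInducedP4 G := by
  have hiff : HasInducedP4 G ↔ CographAux.P4On G Set.univ := by
    constructor
    · rintro ⟨a, b, c, d, h⟩
      exact ⟨a, b, c, d, trivial, trivial, trivial, trivial, h⟩
    · rintro ⟨a, b, c, d, -, -, -, -, h⟩
      exact ⟨a, b, c, d, h⟩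
  constructor
  · intro h hp4
    exact CographAux.not_p4on_of_cographOn h (hiff.mp hp4)
  · intro h
    exact CographAux.cographOn_of_p4free (Set.univ : Set V).ncard Set.univ rfl
      Set.univ_nonempty (fun hp => h (hiff.mpr hp))
end

section
/- There exists a constant c > 0 such that for infinitely many n, the number of simple graphs on the labeled vertex set {1,…,n} containing no cycle of length 4 as a subgraph is at least 2^{c·n^{3/2}}. -/
/-- `G` contains no cycle of length 4 as a subgraph. -/
def C4Free {V : Type*} (G : SimpleGraph V) : Prop :=
  ¬ ∃ u v w x : V, u ≠ v ∧ u ≠ w ∧ u ≠ x ∧ v ≠ w ∧ v ≠ x ∧ w ≠ x ∧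
    G.Adj u v ∧ G.Adj v w ∧ G.Adj w x ∧ G.Adj x u

lemma C4Free.mono {V : Type*} {G H : SimpleGraph V} (hGH : G ≤ H) (hH : C4Free H) :
    C4Free G := by
  intro ⟨u, v, w, x, h1, h2, h3, h4, h5, h6, a1, a2, a3, a4⟩
  exact hH ⟨u, v, w, x, h1, h2, h3, h4, h5, h6, hGH a1, hGH a2, hGH a3, hGH a4⟩

/-- For any C4-free graph `H`, there are at least `2 ^ H.edgeFinset.card` C4-free graphs. -/
lemma count_ge {V : Type*} [Fintype V] [DecidableEq V] (H : SimpleGraph V)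
    [DecidableRel H.Adj] (hH : C4Free H) :
    2 ^ H.edgeFinset.card ≤ {G : SimpleGraph V | C4Free G}.ncard := by
  classical
  have hfin : ({G : SimpleGraph V | C4Free G}).Finite := Set.toFinite _
  rw [Set.ncard_eq_toFinset_card _ hfin, ← Finset.card_powerset]
  refine Finset.card_le_card_of_injOn (fun s => SimpleGraph.fromEdgeSet ↑s) ?_ ?_
  · intro s hs
    rw [Finset.mem_coe, Finset.mem_powerset] at hs
    rw [Finset.mem_coe, Set.Finite.mem_toFinset, Set.mem_setOf_eq]
    refine C4Free.mono ?_ hH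
    have : (↑s : Set (Sym2 V)) ⊆ H.edgeSet := by
      intro x hx
      exact (SimpleGraph.mem_edgeFinset).1 (hs hx)
    calc SimpleGraph.fromEdgeSet ↑s ≤ SimpleGraph.fromEdgeSet H.edgeSet :=
          SimpleGraph.fromEdgeSet_mono this
      _ = H := SimpleGraph.fromEdgeSet_edgeSet H
  · intro s hs t ht hst
    rw [Finset.mem_coe, Finset.mem_powerset] at hs ht
    have key : ∀ u : Finset (Sym2 V), u ⊆ H.edgeFinset →
        (SimpleGraph.fromEdgeSet (↑u : Set (Sym2 V))).edgeSet = ↑u := by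
      intro u hu
      rw [SimpleGraph.edgeSet_fromEdgeSet]
      ext x
      simp only [Set.mem_diff, Set.mem_setOf_eq, Finset.mem_coe, and_iff_left_iff_imp]
      intro hx
      exact H.not_isDiag_of_mem_edgeSet ((SimpleGraph.mem_edgeFinset).1 (hu hx))
    have : (↑s : Set (Sym2 V)) = ↑t := by
      rw [← key s hs, ← key t ht]
      simp only at hst
      rw [hst]
    exact_mod_cast this

section ER

variable (p : ℕ) [Fact p.Prime] (n : ℕ) (e : Fin n ≃ (ZMod p × ZMod p))

/-- The Erdős–Rényi-style C4-free graph. -/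
def ERGraph : SimpleGraph (Fin n) where
  Adj i j := i ≠ j ∧ (e i).2 + (e j).2 = (e i).1 * (e j).1
  symm := by
    refine ⟨?_⟩
    intro i j ⟨h1, h2⟩
    exact ⟨h1.symm, by rw [add_comm, mul_comm]; exact h2⟩
  loopless := ⟨fun i ⟨h, _⟩ => h rfl⟩

instance : DecidableRel (ERGraph p n e).Adj :=
  fun i j => inferInstanceAs (Decidable (_ ∧ _))

lemma ERGraph_C4Free : C4Free (ERGraph p n e) := by
  rintro ⟨u, v, w, x, huv, huw, hux, hvw, hvx, hwx, ⟨-, a1⟩, ⟨-, a2⟩, ⟨-, a3⟩, ⟨-, a4⟩⟩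
  -- coordinates
  set a := (e u).1; set b := (e u).2
  set c := (e w).1; set d := (e w).2
  set s := (e v).1; set t := (e v).2
  set s' := (e x).1; set t' := (e x).2
  -- a1 : b + t = a * s, a2 : t + d = s * c, a3 : d + t' = c * s', a4 : t' + b = s' * a
  have h1 : b - d = (a - c) * s := by ring_nf; linear_combination a1 - a2
  have h2 : b - d = (a - c) * s' := by ring_nf; linear_combination a4 - a3
  by_cases hac : a = c
  · have hbd : b = d := by
      have := h1
      rw [hac, sub_self, zero_mul, sub_eq_zero] at this
      exact this
    exact huw (e.injective (Prod.ext hac hbd))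
  · have hss : s = s' := by
      have hne : a - c ≠ 0 := sub_ne_zero_of_ne hac
      have := h1.symm.trans h2
      exact mul_left_cancel₀ hne this
    have htt : t = t' := by
      have e1 : t = a * s - b := by linear_combination a1
      have e2 : t' = s' * a - b := by linear_combination a4
      rw [e1, e2, hss]; ring
    exact hvx (e.injective (Prod.ext hss htt))

lemma ERGraph_degree (i : Fin n) : p - 1 ≤ (ERGraph p n e).degree i := by
  classical
  set a := (e i).1; set b := (e i).2
  set F : ZMod p → Fin n := fun c => e.symm (c, a * c - b) with hF
  have hFinj : Function.Injective F := by
    intro c c' h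
    have := e.symm.injective h
    exact (Prod.ext_iff.1 this).1
  have hsub : (Finset.univ.image F).erase i ⊆ (ERGraph p n e).neighborFinset i := by
    intro j hj
    rw [Finset.mem_erase] at hj
    obtain ⟨hji, hj⟩ := hj
    rw [Finset.mem_image] at hj
    obtain ⟨c, -, rfl⟩ := hj
    rw [SimpleGraph.mem_neighborFinset]
    refine ⟨Ne.symm hji, ?_⟩
    have : e (F c) = (c, a * c - b) := e.apply_symm_apply _
    rw [this]
    simp only []
    ring
  calc p - 1 = Fintype.card (ZMod p) - 1 := by
        haveI : NeZero p := ⟨(Fact.out : p.Prime).ne_zero⟩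
        rw [ZMod.card]
    _ = (Finset.univ.image F).card - 1 := by
        rw [Finset.card_image_of_injective _ hFinj, Finset.card_univ]
    _ ≤ ((Finset.univ.image F).erase i).card := Finset.pred_card_le_card_erase
    _ ≤ ((ERGraph p n e).neighborFinset i).card := Finset.card_le_card hsub
    _ = (ERGraph p n e).degree i := ((ERGraph p n e).card_neighborFinset_eq_degree i).symm

lemma ERGraph_edges (hn : n = p ^ 2) :
    p ^ 2 * (p - 1) ≤ 2 * (ERGraph p n e).edgeFinset.card := by
  classical
  have hsum := (ERGraph p n e).sum_degrees_eq_twice_card_edges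
  calc p ^ 2 * (p - 1) = ∑ _i : Fin n, (p - 1) := by
        rw [Finset.sum_const, Finset.card_univ, Fintype.card_fin, hn, smul_eq_mul, mul_comm]
    _ ≤ ∑ i : Fin n, (ERGraph p n e).degree i :=
        Finset.sum_le_sum fun i _ => ERGraph_degree p n e i
    _ = 2 * (ERGraph p n e).edgeFinset.card := hsum

end ER

/-- There is a constant `c > 0` such that for infinitely many `n`, the number of
`C₄`-free graphs on the labeled vertex set `{1,…,n}` is at least `2^(c·n^(3/2))`. -/
theorem many_C4_free_graphs :
    ∃ c : ℝ, 0 < c ∧ ∀ N : ℕ, ∃ n : ℕ, N ≤ n ∧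
      (2 : ℝ) ^ (c * (n : ℝ) ^ ((3 : ℝ) / 2)) ≤
        (({G : SimpleGraph (Fin n) | C4Free G}).ncard : ℝ) := by
  classical
  refine ⟨1 / 4, by norm_num, fun N => ?_⟩
  obtain ⟨p, hpN, hp⟩ := Nat.exists_infinite_primes (max N 2)
  haveI : Fact p.Prime := ⟨hp⟩
  haveI : NeZero p := ⟨hp.ne_zero⟩
  have hp2 : 2 ≤ p := le_trans (le_max_right N 2) hpN
  refine ⟨p ^ 2, ?_, ?_⟩
  · calc N ≤ p := le_trans (le_max_left N 2) hpN
      _ ≤ p ^ 2 := Nat.le_self_pow two_ne_zero p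
  · have ecard : Fintype.card (Fin (p ^ 2)) = Fintype.card (ZMod p × ZMod p) := by
      simp [ZMod.card, sq]
    obtain e := Fintype.equivOfCardEq ecard
    set H := ERGraph p (p ^ 2) e with hH
    set m := H.edgeFinset.card with hm
    have hcount : 2 ^ m ≤ ({G : SimpleGraph (Fin (p ^ 2)) | C4Free G}).ncard :=
      count_ge H (ERGraph_C4Free p (p ^ 2) e)
    have hedges : p ^ 2 * (p - 1) ≤ 2 * m := ERGraph_edges p (p ^ 2) e rfl
    -- p ^ 3 ≤ 4 * m
    have hcube : p ^ 3 ≤ 4 * m := by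
      calc p ^ 3 = p ^ 2 * p := by ring
        _ ≤ p ^ 2 * (2 * (p - 1)) := by
            apply Nat.mul_le_mul_left
            omega
        _ = 2 * (p ^ 2 * (p - 1)) := by ring
        _ ≤ 2 * (2 * m) := by exact Nat.mul_le_mul_left 2 hedges
        _ = 4 * m := by ring
    -- real arithmetic
    have hbase : (1 : ℝ) < 2 := one_lt_two
    have hexp : (1 / 4 : ℝ) * ((p ^ 2 : ℕ) : ℝ) ^ ((3 : ℝ) / 2) ≤ (m : ℝ) := by
      have hrw : ((p ^ 2 : ℕ) : ℝ) ^ ((3 : ℝ) / 2) = ((p ^ 3 : ℕ) : ℝ) := by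
        push_cast
        rw [← Real.rpow_natCast (p : ℝ) 2, ← Real.rpow_natCast (p : ℝ) 3,
          ← Real.rpow_mul (Nat.cast_nonneg p)]
        norm_num
      rw [hrw]
      have : ((p ^ 3 : ℕ) : ℝ) ≤ 4 * (m : ℝ) := by exact_mod_cast hcube
      linarith
    calc (2 : ℝ) ^ ((1 / 4 : ℝ) * ((p ^ 2 : ℕ) : ℝ) ^ ((3 : ℝ) / 2))
        ≤ (2 : ℝ) ^ ((m : ℕ) : ℝ) := by
          apply Real.rpow_le_rpow_left_iff hbase |>.2 hexp
      _ = ((2 ^ m : ℕ) : ℝ) := by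
          rw [Real.rpow_natCast]; push_cast; ring
      _ ≤ (({G : SimpleGraph (Fin (p ^ 2)) | C4Free G}).ncard : ℝ) := by
          exact_mod_cast hcount
end

section
/- Let G₁ and G₂ be vertex-disjoint k-colored graphs and S ⊆ {1,…,k}×{1,…,k}. Then h₃(G₁ ⋈_S G₂) equals the set of triples (y₁ ∨ z₁, y₂ ∨ z₂, y₃ ∨ z₃) (where ∨ denotes bitwise OR of vectors in {0,1}^k) ranging over all (y₁,y₂,y₃) ∈ h₃(G₁) and (z₁,z₂,z₃) ∈ h₃(G₂) such that there exist no pair (p,q) ∈ S and index j ∈ {1,2,3} with y_j[p] = 1 and z_j[q] = 1. -/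
set_option maxHeartbeats 1000000


/-- `h3 G c` is the homomorphism class of the `k`-colored graph `(G, c)` for
non-3-colorability: the set of triples `(b₁, b₂, b₃)` of boolean vectors of length `k`
encoding, for some partition of the vertex set into three independent sets
`(X₁, X₂, X₃)`, which colors appear in each part. -/
def h3 {V : Type*} {k : ℕ} (G : SimpleGraph V) (c : V → Fin k) :
    Set ((Fin k → Bool) × (Fin k → Bool) × (Fin k → Bool)) :=
  { b | ∃ X₁ X₂ X₃ : Set V,
      X₁ ∪ X₂ ∪ X₃ = Set.univ ∧
      Disjoint X₁ X₂ ∧ Disjoint X₁ X₃ ∧ Disjoint X₂ X₃ ∧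
      (∀ u ∈ X₁, ∀ v ∈ X₁, ¬ G.Adj u v) ∧
      (∀ u ∈ X₂, ∀ v ∈ X₂, ¬ G.Adj u v) ∧
      (∀ u ∈ X₃, ∀ v ∈ X₃, ¬ G.Adj u v) ∧
      (∀ i, b.1 i = true ↔ ∃ v ∈ X₁, c v = i) ∧
      (∀ i, b.2.1 i = true ↔ ∃ v ∈ X₂, c v = i) ∧
      (∀ i, b.2.2 i = true ↔ ∃ v ∈ X₃, c v = i) }

lemma disj_aux {α β : Type*} {A A' : Set α} {B B' : Set β} (hA : Disjoint A A')
    (hB : Disjoint B B') :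
    Disjoint (Sum.inl '' A ∪ Sum.inr '' B) (Sum.inl '' A' ∪ Sum.inr '' B' : Set (α ⊕ β)) := by
  rw [Set.disjoint_left]
  rintro x (⟨a, ha, rfl⟩ | ⟨v, hv, rfl⟩) (⟨a', ha', h⟩ | ⟨v', hv', h⟩)
  · cases Sum.inl.inj h; exact Set.disjoint_left.mp hA ha ha'
  · exact nomatch h
  · exact nomatch h
  · cases Sum.inr.inj h; exact Set.disjoint_left.mp hB hv hv'

/-- The homomorphism class of a join `G₁ ⋈_S G₂` is obtained from the classes of `G₁`
and `G₂`: it consists of the componentwise bitwise ORs `(y₁ ∨ z₁, y₂ ∨ z₂, y₃ ∨ z₃)` of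
triples `y ∈ h3 G₁` and `z ∈ h3 G₂` that are compatible, i.e., such that no pair
`(p,q) ∈ S` and index `j` satisfy `y_j[p] = 1` and `z_j[q] = 1`. -/
theorem h3_joinGraph {k : ℕ} {α β : Type*} [Fintype α] [Fintype β]
    (G₁ : SimpleGraph α) (G₂ : SimpleGraph β) (c₁ : α → Fin k) (c₂ : β → Fin k)
    (S : Set (Fin k × Fin k)) :
    h3 (joinGraph G₁ G₂ c₁ c₂ S) (Sum.elim c₁ c₂) =
      { b | ∃ y ∈ h3 G₁ c₁, ∃ z ∈ h3 G₂ c₂,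
          (¬ ∃ p q, (p, q) ∈ S ∧
            ((y.1 p = true ∧ z.1 q = true) ∨ (y.2.1 p = true ∧ z.2.1 q = true) ∨
              (y.2.2 p = true ∧ z.2.2 q = true))) ∧
          b = (fun i => y.1 i || z.1 i, fun i => y.2.1 i || z.2.1 i,
                fun i => y.2.2 i || z.2.2 i) } := by
  classical
  ext b
  constructor
  · rintro ⟨X₁, X₂, X₃, hU, hd12, hd13, hd23, hi1, hi2, hi3, hb1, hb2, hb3⟩
    refine ⟨(fun i => decide (∃ v ∈ Sum.inl ⁻¹' X₁, c₁ v = i),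
             fun i => decide (∃ v ∈ Sum.inl ⁻¹' X₂, c₁ v = i),
             fun i => decide (∃ v ∈ Sum.inl ⁻¹' X₃, c₁ v = i)),
            ⟨Sum.inl ⁻¹' X₁, Sum.inl ⁻¹' X₂, Sum.inl ⁻¹' X₃, ?_,
              hd12.preimage _, hd13.preimage _, hd23.preimage _,
              fun u hu v hv h => hi1 _ hu _ hv h,
              fun u hu v hv h => hi2 _ hu _ hv h,
              fun u hu v hv h => hi3 _ hu _ hv h,
              fun i => by simp, fun i => by simp, fun i => by simp⟩,
            (fun i => decide (∃ v ∈ Sum.inr ⁻¹' X₁, c₂ v = i),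
             fun i => decide (∃ v ∈ Sum.inr ⁻¹' X₂, c₂ v = i),
             fun i => decide (∃ v ∈ Sum.inr ⁻¹' X₃, c₂ v = i)),
            ⟨Sum.inr ⁻¹' X₁, Sum.inr ⁻¹' X₂, Sum.inr ⁻¹' X₃, ?_,
              hd12.preimage _, hd13.preimage _, hd23.preimage _,
              fun u hu v hv h => hi1 _ hu _ hv h,
              fun u hu v hv h => hi2 _ hu _ hv h,
              fun u hu v hv h => hi3 _ hu _ hv h,
              fun i => by simp, fun i => by simp, fun i => by simp⟩,
            ?_, ?_⟩
    · rw [← Set.preimage_union, ← Set.preimage_union, hU, Set.preimage_univ]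
    · rw [← Set.preimage_union, ← Set.preimage_union, hU, Set.preimage_univ]
    · rintro ⟨p, q, hpq, h⟩
      simp only [decide_eq_true_eq, Set.mem_preimage] at h
      rcases h with ⟨⟨a, ha, hca⟩, ⟨v, hv, hcv⟩⟩ | ⟨⟨a, ha, hca⟩, ⟨v, hv, hcv⟩⟩ |
        ⟨⟨a, ha, hca⟩, ⟨v, hv, hcv⟩⟩
      · exact hi1 _ ha _ hv (show (c₁ a, c₂ v) ∈ S by rw [hca, hcv]; exact hpq)
      · exact hi2 _ ha _ hv (show (c₁ a, c₂ v) ∈ S by rw [hca, hcv]; exact hpq)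
      · exact hi3 _ ha _ hv (show (c₁ a, c₂ v) ∈ S by rw [hca, hcv]; exact hpq)
    · refine Prod.ext ?_ (Prod.ext ?_ ?_) <;> funext i <;> rw [Bool.eq_iff_iff]
      · rw [hb1 i]; simp [Sum.exists]
      · rw [hb2 i]; simp [Sum.exists]
      · rw [hb3 i]; simp [Sum.exists]
  · rintro ⟨y, ⟨A₁, A₂, A₃, hAU, hA12, hA13, hA23, hiA1, hiA2, hiA3, hy1, hy2, hy3⟩,
      z, ⟨B₁, B₂, B₃, hBU, hB12, hB13, hB23, hiB1, hiB2, hiB3, hz1, hz2, hz3⟩, hcompat, rfl⟩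
    refine ⟨Sum.inl '' A₁ ∪ Sum.inr '' B₁, Sum.inl '' A₂ ∪ Sum.inr '' B₂,
      Sum.inl '' A₃ ∪ Sum.inr '' B₃, ?_,
      disj_aux hA12 hB12, disj_aux hA13 hB13, disj_aux hA23 hB23, ?_, ?_, ?_, ?_, ?_, ?_⟩
    · apply Set.eq_univ_of_forall
      rintro (a | v)
      · rcases hAU.ge (Set.mem_univ a) with (h | h) | h
        · exact Set.mem_union_left _ (Set.mem_union_left _ (Set.mem_union_left _ ⟨a, h, rfl⟩))
        · exact Set.mem_union_left _ (Set.mem_union_right _ (Set.mem_union_left _ ⟨a, h, rfl⟩))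
        · exact Set.mem_union_right _ (Set.mem_union_left _ ⟨a, h, rfl⟩)
      · rcases hBU.ge (Set.mem_univ v) with (h | h) | h
        · exact Set.mem_union_left _ (Set.mem_union_left _ (Set.mem_union_right _ ⟨v, h, rfl⟩))
        · exact Set.mem_union_left _ (Set.mem_union_right _ (Set.mem_union_right _ ⟨v, h, rfl⟩))
        · exact Set.mem_union_right _ (Set.mem_union_right _ ⟨v, h, rfl⟩)
    · rintro (u | u) hu (v | v) hv hadj <;> simp at hu hv
      · exact hiA1 _ hu _ hv hadj
      · exact hcompat ⟨c₁ u, c₂ v, hadj, Or.inl ⟨(hy1 _).2 ⟨u, hu, rfl⟩, (hz1 _).2 ⟨v, hv, rfl⟩⟩⟩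
      · exact hcompat ⟨c₁ v, c₂ u, hadj, Or.inl ⟨(hy1 _).2 ⟨v, hv, rfl⟩, (hz1 _).2 ⟨u, hu, rfl⟩⟩⟩
      · exact hiB1 _ hu _ hv hadj
    · rintro (u | u) hu (v | v) hv hadj <;> simp at hu hv
      · exact hiA2 _ hu _ hv hadj
      · exact hcompat ⟨c₁ u, c₂ v, hadj, Or.inr (Or.inl ⟨(hy2 _).2 ⟨u, hu, rfl⟩, (hz2 _).2 ⟨v, hv, rfl⟩⟩)⟩
      · exact hcompat ⟨c₁ v, c₂ u, hadj, Or.inr (Or.inl ⟨(hy2 _).2 ⟨v, hv, rfl⟩, (hz2 _).2 ⟨u, hu, rfl⟩⟩)⟩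
      · exact hiB2 _ hu _ hv hadj
    · rintro (u | u) hu (v | v) hv hadj <;> simp at hu hv
      · exact hiA3 _ hu _ hv hadj
      · exact hcompat ⟨c₁ u, c₂ v, hadj, Or.inr (Or.inr ⟨(hy3 _).2 ⟨u, hu, rfl⟩, (hz3 _).2 ⟨v, hv, rfl⟩⟩)⟩
      · exact hcompat ⟨c₁ v, c₂ u, hadj, Or.inr (Or.inr ⟨(hy3 _).2 ⟨v, hv, rfl⟩, (hz3 _).2 ⟨u, hu, rfl⟩⟩)⟩
      · exact hiB3 _ hu _ hv hadj
    · intro i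
      simp only [Bool.or_eq_true, hy1, hz1, Sum.exists, Set.mem_union, Set.mem_image,
        Sum.elim_inl, Sum.elim_inr]
      constructor
      · rintro (⟨v, hv, rfl⟩ | ⟨v, hv, rfl⟩)
        · exact Or.inl ⟨v, Or.inl ⟨v, hv, rfl⟩, rfl⟩
        · exact Or.inr ⟨v, Or.inr ⟨v, hv, rfl⟩, rfl⟩
      · rintro (⟨a, ⟨a', ha, h⟩ | ⟨v', hv, h⟩, hc⟩ | ⟨v, ⟨a', ha, h⟩ | ⟨v', hv, h⟩, hc⟩) <;>
          first
          | (cases h; done)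
          | (cases h; exact Or.inl ⟨_, ha, hc⟩)
          | (cases h; exact Or.inr ⟨_, hv, hc⟩)
    · intro i
      simp only [Bool.or_eq_true, hy2, hz2, Sum.exists, Set.mem_union, Set.mem_image,
        Sum.elim_inl, Sum.elim_inr]
      constructor
      · rintro (⟨v, hv, rfl⟩ | ⟨v, hv, rfl⟩)
        · exact Or.inl ⟨v, Or.inl ⟨v, hv, rfl⟩, rfl⟩
        · exact Or.inr ⟨v, Or.inr ⟨v, hv, rfl⟩, rfl⟩
      · rintro (⟨a, ⟨a', ha, h⟩ | ⟨v', hv, h⟩, hc⟩ | ⟨v, ⟨a', ha, h⟩ | ⟨v', hv, h⟩, hc⟩) <;>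
          first
          | (cases h; done)
          | (cases h; exact Or.inl ⟨_, ha, hc⟩)
          | (cases h; exact Or.inr ⟨_, hv, hc⟩)
    · intro i
      simp only [Bool.or_eq_true, hy3, hz3, Sum.exists, Set.mem_union, Set.mem_image,
        Sum.elim_inl, Sum.elim_inr]
      constructor
      · rintro (⟨v, hv, rfl⟩ | ⟨v, hv, rfl⟩)
        · exact Or.inl ⟨v, Or.inl ⟨v, hv, rfl⟩, rfl⟩
        · exact Or.inr ⟨v, Or.inr ⟨v, hv, rfl⟩, rfl⟩
      · rintro (⟨a, ⟨a', ha, h⟩ | ⟨v', hv, h⟩, hc⟩ | ⟨v, ⟨a', ha, h⟩ | ⟨v', hv, h⟩, hc⟩) <;>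
          first
          | (cases h; done)
          | (cases h; exact Or.inl ⟨_, ha, hc⟩)
          | (cases h; exact Or.inr ⟨_, hv, hc⟩)
end

section
/- Let G be a k-colored graph and R : {1,…,k} → {1,…,k} a recoloring. Then h₃(recolor_R(G)) = { (R̂(b₁), R̂(b₂), R̂(b₃)) : (b₁,b₂,b₃) ∈ h₃(G) }, where for a vector b ∈ {0,1}^k the vector R̂(b) ∈ {0,1}^k is defined by R̂(b)[q] = 1 if and only if there exists p ∈ {1,…,k} with R(p) = q and b[p] = 1. -/
/-- For a recoloring `R` and a boolean vector `b` of length `k`, `Rhat R b` is the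
boolean vector with `Rhat R b [q] = 1` iff there is `p` with `R p = q` and `b[p] = 1`. -/
def Rhat {k : ℕ} (R : Fin k → Fin k) (b : Fin k → Bool) : Fin k → Bool :=
  fun q => decide (∃ p, R p = q ∧ b p = true)

lemma rhat_key {V : Type*} {k : ℕ} (R : Fin k → Fin k) (c : V → Fin k)
    (X : Set V) (bq : Fin k → Bool) (h : ∀ i, bq i = true ↔ ∃ v ∈ X, c v = i) :
    ∀ q, Rhat R bq q = true ↔ ∃ v ∈ X, (R ∘ c) v = q := by
  intro q
  simp only [Rhat, decide_eq_true_eq, Function.comp_apply]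
  constructor
  · rintro ⟨p, hp, hb⟩
    obtain ⟨v, hv, hcv⟩ := (h p).mp hb
    exact ⟨v, hv, by rw [hcv, hp]⟩
  · rintro ⟨v, hv, hcv⟩
    exact ⟨c v, hcv, (h (c v)).mpr ⟨v, hv, rfl⟩⟩

attribute [local instance] Classical.propDecidable

/-- The homomorphism class of a recolored graph `recolor_R(G)` is the image of the class
of `G` under the componentwise application of `Rhat R`. -/
theorem h3_recolor {k : ℕ} {V : Type*} [Fintype V]
    (G : SimpleGraph V) (c : V → Fin k) (R : Fin k → Fin k) :
    h3 G (R ∘ c) =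
      (fun b : (Fin k → Bool) × (Fin k → Bool) × (Fin k → Bool) =>
        (Rhat R b.1, Rhat R b.2.1, Rhat R b.2.2)) '' h3 G c := by
  ext b
  constructor
  · rintro ⟨X₁, X₂, X₃, hU, h12, h13, h23, i1, i2, i3, hb1, hb2, hb3⟩
    refine ⟨(fun i => decide (∃ v ∈ X₁, c v = i), fun i => decide (∃ v ∈ X₂, c v = i),
        fun i => decide (∃ v ∈ X₃, c v = i)),
      ⟨X₁, X₂, X₃, hU, h12, h13, h23, i1, i2, i3,
        fun i => by simp, fun i => by simp, fun i => by simp⟩, ?_⟩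
    have e1 := rhat_key R c X₁ (fun i => decide (∃ v ∈ X₁, c v = i)) (fun i => by simp)
    have e2 := rhat_key R c X₂ (fun i => decide (∃ v ∈ X₂, c v = i)) (fun i => by simp)
    have e3 := rhat_key R c X₃ (fun i => decide (∃ v ∈ X₃, c v = i)) (fun i => by simp)
    obtain ⟨b1, b2, b3⟩ := b
    simp only [Prod.mk.injEq]
    refine ⟨funext fun q => ?_, funext fun q => ?_, funext fun q => ?_⟩
    · rw [Bool.eq_iff_iff]; rw [e1 q, hb1 q]
    · rw [Bool.eq_iff_iff]; rw [e2 q, hb2 q]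
    · rw [Bool.eq_iff_iff]; rw [e3 q, hb3 q]
  · rintro ⟨⟨a1, a2, a3⟩, ⟨X₁, X₂, X₃, hU, h12, h13, h23, i1, i2, i3, hb1, hb2, hb3⟩, rfl⟩
    exact ⟨X₁, X₂, X₃, hU, h12, h13, h23, i1, i2, i3,
      rhat_key R c X₁ a1 hb1, rhat_key R c X₂ a2 hb2, rhat_key R c X₃ a3 hb3⟩
end

section
/- Let G₁ and G₂ be vertex-disjoint k-colored graphs, S ⊆ {1,…,k}×{1,…,k}, G = G₁ ⋈_S G₂, and let w assign an integer weight to every vertex of G. For a k-colored graph H (among G, G₁, G₂) and a set of colors c ⊆ {1,…,k}, let MaxW(H,c) ∈ ℤ ∪ {−∞} be the maximum of Σ_{x∈X} w(x) over all independent sets X of H whose set of colors is exactly c, with MaxW(H,c) = −∞ if no such X exists. Then for every c ⊆ {1,…,k}: MaxW(G,c) equals the maximum, over all pairs (c₁,c₂) of subsets of {1,…,k} satisfying c₁ ∪ c₂ = c and such that there is no pair (p,q) ∈ S with p ∈ c₁ and q ∈ c₂, of MaxW(G₁,c₁) + MaxW(G₂,c₂) (with the conventions that the maximum over an empty collection is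 −∞ and that (−∞) + m = −∞ for every m). -/
/-- `MaxW G col w s` is the maximum total weight of an independent set of `G` whose set
of colors is exactly `s`, and `⊥` (i.e. `-∞`) if there is no such independent set. -/
noncomputable def MaxW {V : Type*} [Fintype V] {k : ℕ} (G : SimpleGraph V)
    (col : V → Fin k) (w : V → ℤ) (s : Finset (Fin k)) : WithBot ℤ := by
  classical
  exact ((Finset.univ : Finset (Finset V)).filter
      (fun X => (∀ u ∈ X, ∀ v ∈ X, ¬ G.Adj u v) ∧ X.image col = s)).sup
    (fun X => ((∑ v ∈ X, w v : ℤ) : WithBot ℤ))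

/-- The maximum over all pairs `(c₁, c₂)` of color sets with `c₁ ∪ c₂ = s` and not
creating any `S`-edge, of `MaxW G₁ c₁ + MaxW G₂ c₂`. -/
noncomputable def joinMaxRHS {k : ℕ} {α β : Type*} [Fintype α] [Fintype β]
    (G₁ : SimpleGraph α) (G₂ : SimpleGraph β) (c₁ : α → Fin k) (c₂ : β → Fin k)
    (S : Set (Fin k × Fin k)) (w : α ⊕ β → ℤ) (s : Finset (Fin k)) : WithBot ℤ := by
  classical
  exact ((Finset.univ : Finset (Finset (Fin k) × Finset (Fin k))).filter
      (fun p => p.1 ∪ p.2 = s ∧ ¬ ∃ q ∈ S, q.1 ∈ p.1 ∧ q.2 ∈ p.2)).sup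
    (fun p => MaxW G₁ c₁ (fun a => w (Sum.inl a)) p.1 +
      MaxW G₂ c₂ (fun b => w (Sum.inr b)) p.2)

lemma image_disjSum_elim {α β γ : Type*} [DecidableEq γ] (A : Finset α) (B : Finset β)
    (f : α → γ) (g : β → γ) :
    (A.disjSum B).image (Sum.elim f g) = A.image f ∪ B.image g := by
  ext i
  simp only [Finset.mem_image, Finset.mem_union, Finset.mem_disjSum]
  constructor
  · rintro ⟨v, (⟨a, ha, rfl⟩ | ⟨b, hb, rfl⟩), rfl⟩
    · exact Or.inl ⟨a, ha, rfl⟩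
    · exact Or.inr ⟨b, hb, rfl⟩
  · rintro (⟨a, ha, rfl⟩ | ⟨b, hb, rfl⟩)
    · exact ⟨Sum.inl a, Or.inl ⟨a, ha, rfl⟩, rfl⟩
    · exact ⟨Sum.inr b, Or.inr ⟨b, hb, rfl⟩, rfl⟩

lemma le_MaxW {V : Type*} [Fintype V] {k : ℕ} {G : SimpleGraph V}
    {col : V → Fin k} {w : V → ℤ} {s : Finset (Fin k)} {X : Finset V}
    (h1 : ∀ u ∈ X, ∀ v ∈ X, ¬ G.Adj u v) (h2 : X.image col = s) :
    ((∑ v ∈ X, w v : ℤ) : WithBot ℤ) ≤ MaxW G col w s := by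
  classical
  unfold MaxW
  apply Finset.le_sup (b := X)
  rw [Finset.mem_filter]
  exact ⟨Finset.mem_univ _, h1, h2⟩

lemma MaxW_le {V : Type*} [Fintype V] {k : ℕ} {G : SimpleGraph V}
    {col : V → Fin k} {w : V → ℤ} {s : Finset (Fin k)} {M : WithBot ℤ}
    (h : ∀ X : Finset V, (∀ u ∈ X, ∀ v ∈ X, ¬ G.Adj u v) → X.image col = s →
      ((∑ v ∈ X, w v : ℤ) : WithBot ℤ) ≤ M) :
    MaxW G col w s ≤ M := by
  classical
  unfold MaxW
  apply Finset.sup_le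
  intro X hX
  rw [Finset.mem_filter] at hX
  exact h X hX.2.1 hX.2.2

lemma MaxW_eq_bot_or_exists {V : Type*} [Fintype V] {k : ℕ} (G : SimpleGraph V)
    (col : V → Fin k) (w : V → ℤ) (s : Finset (Fin k)) :
    MaxW G col w s = ⊥ ∨ ∃ X : Finset V, (∀ u ∈ X, ∀ v ∈ X, ¬ G.Adj u v) ∧
      X.image col = s ∧ MaxW G col w s = ((∑ v ∈ X, w v : ℤ) : WithBot ℤ) := by
  classical
  unfold MaxW
  set F := ((Finset.univ : Finset (Finset V)).filter
      (fun X => (∀ u ∈ X, ∀ v ∈ X, ¬ G.Adj u v) ∧ X.image col = s)) with hF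
  rcases F.eq_empty_or_nonempty with h | h
  · left; rw [h, Finset.sup_empty]
  · right
    obtain ⟨X, hXmem, hXeq⟩ := Finset.exists_mem_eq_sup F h
      (fun X : Finset V => ((∑ v ∈ X, w v : ℤ) : WithBot ℤ))
    rw [hF, Finset.mem_filter] at hXmem
    exact ⟨X, hXmem.2.1, hXmem.2.2, hXeq⟩

lemma le_joinMaxRHS {k : ℕ} {α β : Type*} [Fintype α] [Fintype β]
    {G₁ : SimpleGraph α} {G₂ : SimpleGraph β} {c₁ : α → Fin k} {c₂ : β → Fin k}
    {S : Set (Fin k × Fin k)} {w : α ⊕ β → ℤ} {s : Finset (Fin k)}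
    {p1 p2 : Finset (Fin k)} (h1 : p1 ∪ p2 = s)
    (h2 : ¬ ∃ q ∈ S, q.1 ∈ p1 ∧ q.2 ∈ p2) :
    MaxW G₁ c₁ (fun a => w (Sum.inl a)) p1 + MaxW G₂ c₂ (fun b => w (Sum.inr b)) p2 ≤
      joinMaxRHS G₁ G₂ c₁ c₂ S w s := by
  classical
  unfold joinMaxRHS
  apply Finset.le_sup (b := (p1, p2)) (f := fun p : Finset (Fin k) × Finset (Fin k) =>
    MaxW G₁ c₁ (fun a => w (Sum.inl a)) p.1 + MaxW G₂ c₂ (fun b => w (Sum.inr b)) p.2)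
  rw [Finset.mem_filter]
  exact ⟨Finset.mem_univ _, h1, h2⟩

lemma joinMaxRHS_le {k : ℕ} {α β : Type*} [Fintype α] [Fintype β]
    {G₁ : SimpleGraph α} {G₂ : SimpleGraph β} {c₁ : α → Fin k} {c₂ : β → Fin k}
    {S : Set (Fin k × Fin k)} {w : α ⊕ β → ℤ} {s : Finset (Fin k)} {M : WithBot ℤ}
    (h : ∀ p1 p2 : Finset (Fin k), p1 ∪ p2 = s →
      (¬ ∃ q ∈ S, q.1 ∈ p1 ∧ q.2 ∈ p2) →
      MaxW G₁ c₁ (fun a => w (Sum.inl a)) p1 +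
        MaxW G₂ c₂ (fun b => w (Sum.inr b)) p2 ≤ M) :
    joinMaxRHS G₁ G₂ c₁ c₂ S w s ≤ M := by
  classical
  unfold joinMaxRHS
  apply Finset.sup_le
  rintro ⟨p1, p2⟩ hp
  rw [Finset.mem_filter] at hp
  exact h p1 p2 hp.2.1 hp.2.2

/-- Dynamic programming rule for maximum-weight independent sets under the join
operation: for every color set `s`, the maximum weight of an independent set of
`G₁ ⋈_S G₂` with color set exactly `s` is the maximum, over pairs `(c₁, c₂)` of color
sets with `c₁ ∪ c₂ = s` and no pair `(p,q) ∈ S` with `p ∈ c₁`, `q ∈ c₂`, of the sum of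
the corresponding maximum weights in `G₁` and `G₂` (with `⊥` as the maximum of an empty
collection, and `⊥ + m = ⊥`). -/
theorem MaxW_joinGraph {k : ℕ} {α β : Type*} [Fintype α] [Fintype β]
    (G₁ : SimpleGraph α) (G₂ : SimpleGraph β) (c₁ : α → Fin k) (c₂ : β → Fin k)
    (S : Set (Fin k × Fin k)) (w : α ⊕ β → ℤ) (s : Finset (Fin k)) :
    MaxW (joinGraph G₁ G₂ c₁ c₂ S) (Sum.elim c₁ c₂) w s =
      joinMaxRHS G₁ G₂ c₁ c₂ S w s := by
  classical
  apply le_antisymm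
  · apply MaxW_le
    intro X hind himg
    set A : Finset α := X.toLeft with hA
    set B : Finset β := X.toRight with hB
    have hXAB : A.disjSum B = X := Finset.toLeft_disjSum_toRight
    have hunion : A.image c₁ ∪ B.image c₂ = s := by
      rw [← himg, ← hXAB, image_disjSum_elim]
    have hnoS : ¬ ∃ q ∈ S, q.1 ∈ A.image c₁ ∧ q.2 ∈ B.image c₂ := by
      rintro ⟨⟨q1, q2⟩, hqS, hq1, hq2⟩
      simp only [Finset.mem_image] at hq1 hq2
      obtain ⟨a, ha, rfl⟩ := hq1
      obtain ⟨b, hb, rfl⟩ := hq2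
      exact hind (Sum.inl a) (by rwa [← Finset.mem_toLeft]) (Sum.inr b)
        (by rwa [← Finset.mem_toRight]) hqS
    refine le_trans ?_ (le_joinMaxRHS hunion hnoS)
    have hsum : (∑ v ∈ X, w v) = (∑ a ∈ A, w (Sum.inl a)) + ∑ b ∈ B, w (Sum.inr b) := by
      rw [← hXAB, Finset.sum_disjSum]
    rw [hsum, WithBot.coe_add]
    refine add_le_add (le_MaxW ?_ rfl) (le_MaxW ?_ rfl)
    · intro u hu v hv hadj
      exact hind (Sum.inl u) (by rwa [← Finset.mem_toLeft]) (Sum.inl v)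
        (by rwa [← Finset.mem_toLeft]) hadj
    · intro u hu v hv hadj
      exact hind (Sum.inr u) (by rwa [← Finset.mem_toRight]) (Sum.inr v)
        (by rwa [← Finset.mem_toRight]) hadj
  · apply joinMaxRHS_le
    intro p1 p2 hps hpS
    rcases MaxW_eq_bot_or_exists G₁ c₁ (fun a => w (Sum.inl a)) p1 with h1 | ⟨A, hAind, hAimg, hAeq⟩
    · simp [h1]
    rcases MaxW_eq_bot_or_exists G₂ c₂ (fun b => w (Sum.inr b)) p2 with h2 | ⟨B, hBind, hBimg, hBeq⟩
    · simp [h2]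
    rw [hAeq, hBeq, ← WithBot.coe_add]
    have hsum : (∑ v ∈ A, w (Sum.inl v)) + (∑ v ∈ B, w (Sum.inr v)) =
        ∑ v ∈ A.disjSum B, w v := (Finset.sum_disjSum _ _ _).symm
    rw [hsum]
    refine le_MaxW ?_ ?_
    · rintro (u | u) hu (v | v) hv hadj
      · exact hAind u (Finset.inl_mem_disjSum.mp hu) v (Finset.inl_mem_disjSum.mp hv) hadj
      · refine hpS ⟨(c₁ u, c₂ v), hadj, ?_, ?_⟩
        · rw [← hAimg]; exact Finset.mem_image_of_mem _ (Finset.inl_mem_disjSum.mp hu)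
        · rw [← hBimg]; exact Finset.mem_image_of_mem _ (Finset.inr_mem_disjSum.mp hv)
      · refine hpS ⟨(c₁ v, c₂ u), hadj, ?_, ?_⟩
        · rw [← hAimg]; exact Finset.mem_image_of_mem _ (Finset.inl_mem_disjSum.mp hv)
        · rw [← hBimg]; exact Finset.mem_image_of_mem _ (Finset.inr_mem_disjSum.mp hu)
      · exact hBind u (Finset.inr_mem_disjSum.mp hu) v (Finset.inr_mem_disjSum.mp hv) hadj
    · rw [image_disjSum_elim, hAimg, hBimg, hps]
end
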